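/- arXiv:2411.03983 — 3 statements merged into one kernel-verified Lean document; each statement's English description precedes it below -/
import Mathlib

section
/- Let N ≥ 5 and p > N/(N−4). Then the interval (4/(p−1), N−4) is nonempty; fix m with 4/(p−1) < m < N−4 and set M = m(m+2)(m−N+2)(m−N+4). Then M > 0, and for every ε > 0 the function v(x) = ε|x|^{−m} satisfies Δ²v(x) = ε M |x|^{−m−4} for every x ≠ 0. Moreover, if 0 < ε and ε^{p−1} < M, then the function f(x) := Δ²v(x) − v(x)^p = ε M |x|^{−m−4} − ε^p |x|^{−mp} is strictly positive for every |x| ≥ 1; in particular v is a positive stationary classical solution of Δ²v = |v|^p + f(x) on the open exterior {x ∈ ℝ^N : |x| > 1} with strictly positive forcing term f, and v = ε > 0 on the unit sphere. -/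
open MeasureTheory Real Set

noncomputable section

/-- `ℝ^N` -/
abbrev E (N : ℕ) : Type := EuclideanSpace ℝ (Fin N)

/-- The Laplacian: sum of second partial derivatives. -/
def lapl {N : ℕ} (f : E N → ℝ) (x : E N) : ℝ :=
  ∑ i : Fin N,
    fderiv ℝ (fun y => fderiv ℝ f y (EuclideanSpace.single i 1)) x (EuclideanSpace.single i 1)

/-- The biharmonic operator `Δ² = Δ ∘ Δ`. -/
def bilapl {N : ℕ} (f : E N → ℝ) : E N → ℝ := lapl (lapl f)

section AuxLemmas
open Filter
open scoped RealInnerProductSpace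

variable {N : ℕ}

lemma myHasFDeriv_norm_rpow (a : ℝ) {x : E N} (hx : x ≠ 0) :
    HasFDerivAt (fun y : E N => ‖y‖ ^ a)
      ((a * ‖x‖ ^ (a - 2)) • (innerSL ℝ x : E N →L[ℝ] ℝ)) x := by
  have hx0 : (0:ℝ) < ‖x‖ := norm_pos_iff.mpr hx
  have hg : HasFDerivAt (fun y : E N => ⟪y, y⟫)
      ((fderivInnerCLM ℝ (x, x)).comp ((ContinuousLinearMap.id ℝ (E N)).prod
        (ContinuousLinearMap.id ℝ (E N)))) x :=
    (hasFDerivAt_id x).inner ℝ (hasFDerivAt_id x)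
  have hgx : ⟪x, x⟫ = ‖x‖ ^ 2 := real_inner_self_eq_norm_sq x
  have hne : ⟪x, x⟫ ≠ 0 := by rw [hgx]; positivity
  have hr : HasDerivAt (fun t : ℝ => t ^ (a / 2))
      ((a / 2) * ⟪x, x⟫ ^ (a / 2 - 1)) ⟪x, x⟫ :=
    Real.hasDerivAt_rpow_const (Or.inl hne)
  have h := hr.comp_hasFDerivAt_of_eq x hg rfl
  have heq : (fun y : E N => ⟪y, y⟫ ^ (a / 2)) = fun y : E N => ‖y‖ ^ a := by
    funext y
    rw [real_inner_self_eq_norm_sq, ← Real.rpow_natCast ‖y‖ 2,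
      ← Real.rpow_mul (norm_nonneg y)]
    push_cast
    have he2 : 2 * (a / 2) = a := by ring
    rw [he2]
  simp only [Function.comp_def] at h
  rw [heq] at h
  refine h.congr_fderiv ?_
  ext v
  simp only [ContinuousLinearMap.smul_apply, ContinuousLinearMap.coe_comp',
    Function.comp_apply, ContinuousLinearMap.prod_apply, ContinuousLinearMap.coe_id',
    id_eq, fderivInnerCLM_apply, innerSL_apply_apply, smul_eq_mul]
  rw [real_inner_comm v x]
  have h2 : ⟪x, x⟫ ^ (a / 2 - 1) = ‖x‖ ^ (a - 2) := by
    rw [hgx, ← Real.rpow_natCast ‖x‖ 2, ← Real.rpow_mul (norm_nonneg x)]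
    push_cast
    have he : 2 * (a / 2 - 1) = a - 2 := by ring
    rw [he]
  rw [h2]; ring

lemma myHasFDeriv_const_mul (c a : ℝ) {x : E N} (hx : x ≠ 0) :
    HasFDerivAt (fun y : E N => c * ‖y‖ ^ a)
      ((c * (a * ‖x‖ ^ (a - 2))) • (innerSL ℝ x : E N →L[ℝ] ℝ)) x := by
  have h := (myHasFDeriv_norm_rpow a hx).const_mul c
  rwa [smul_smul] at h

lemma fderiv_cn_apply (c a : ℝ) {x : E N} (hx : x ≠ 0) (i : Fin N) :
    fderiv ℝ (fun y : E N => c * ‖y‖ ^ a) x (EuclideanSpace.single i 1)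
      = c * a * ‖x‖ ^ (a - 2) * x i := by
  rw [(myHasFDeriv_const_mul c a hx).fderiv]
  simp only [ContinuousLinearMap.smul_apply, innerSL_apply_apply, smul_eq_mul]
  rw [show ⟪x, EuclideanSpace.single i (1:ℝ)⟫ = x i by
    simp [EuclideanSpace.inner_single_right]]
  ring

lemma second_deriv (c a : ℝ) {x : E N} (hx : x ≠ 0) (i : Fin N) :
    fderiv ℝ (fun y : E N => fderiv ℝ (fun z : E N => c * ‖z‖ ^ a) y
        (EuclideanSpace.single i 1)) x (EuclideanSpace.single i 1)
      = c * a * ((a - 2) * ‖x‖ ^ (a - 4) * (x i) ^ 2 + ‖x‖ ^ (a - 2)) := by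
  have hopen : {y : E N | y ≠ 0} ∈ nhds x := by
    exact IsOpen.mem_nhds isOpen_compl_singleton hx
  have hev : (fun y : E N => fderiv ℝ (fun z : E N => c * ‖z‖ ^ a) y
      (EuclideanSpace.single i 1)) =ᶠ[nhds x]
      (fun y : E N => c * a * (‖y‖ ^ (a - 2) * y i)) := by
    filter_upwards [hopen] with y hy
    rw [fderiv_cn_apply c a hy i]; ring
  rw [hev.fderiv_eq]
  have hu := myHasFDeriv_norm_rpow (a - 2) hx
  have hw : HasFDerivAt (fun y : E N => y i)
      (EuclideanSpace.proj (𝕜 := ℝ) i) x := (EuclideanSpace.proj (𝕜 := ℝ) i).hasFDerivAt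
  have h := (hu.mul hw).const_mul (c * a)
  simp only [Pi.mul_apply] at h
  rw [h.fderiv]
  simp only [ContinuousLinearMap.smul_apply, ContinuousLinearMap.add_apply,
    ContinuousLinearMap.smul_apply, innerSL_apply_apply, smul_eq_mul]
  rw [show ⟪x, EuclideanSpace.single i (1:ℝ)⟫ = x i by
    simp [EuclideanSpace.inner_single_right]]
  rw [show (EuclideanSpace.proj (𝕜 := ℝ) i) (EuclideanSpace.single i (1:ℝ)) = 1 by simp]
  have : a - 2 - 2 = a - 4 := by ring
  rw [this]; ring

lemma sum_sq (x : E N) : ∑ i : Fin N, (x i) ^ 2 = ‖x‖ ^ 2 := by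
  rw [← real_inner_self_eq_norm_sq]
  simp [PiLp.inner_apply, RCLike.inner_apply]
  rw [EuclideanSpace.norm_sq_eq]; simp [sq_abs]

lemma lapl_cn (c a : ℝ) {x : E N} (hx : x ≠ 0) :
    lapl (fun y : E N => c * ‖y‖ ^ a) x
      = c * (a * (a + N - 2)) * ‖x‖ ^ (a - 2) := by
  have hx0 : (0:ℝ) < ‖x‖ := norm_pos_iff.mpr hx
  unfold lapl
  rw [Finset.sum_congr rfl fun i _ => second_deriv c a hx i]
  have hsplit : ∀ i : Fin N, c * a * ((a - 2) * ‖x‖ ^ (a - 4) * (x i) ^ 2 + ‖x‖ ^ (a - 2))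
      = (c * a * (a - 2) * ‖x‖ ^ (a - 4)) * (x i) ^ 2 + c * a * ‖x‖ ^ (a - 2) :=
    fun i => by ring
  simp_rw [hsplit, Finset.sum_add_distrib, ← Finset.mul_sum, sum_sq, Finset.sum_const,
    Finset.card_univ, Fintype.card_fin, nsmul_eq_mul]
  have hxx : ‖x‖ ^ (a - 4) * ‖x‖ ^ (2:ℕ) = ‖x‖ ^ (a - 2) := by
    rw [← Real.rpow_natCast ‖x‖ 2, ← Real.rpow_add hx0]
    push_cast
    have : a - 4 + 2 = a - 2 := by ring
    rw [this]
  push_cast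
  linear_combination (c * a * (a - 2)) * hxx


lemma lapl_congr {f g : E N → ℝ} {x : E N} (h : f =ᶠ[nhds x] g) :
    lapl f x = lapl g x := by
  unfold lapl
  refine Finset.sum_congr rfl fun i _ => ?_
  have h1 : (fun y : E N => fderiv ℝ f y (EuclideanSpace.single i 1))
      =ᶠ[nhds x] (fun y : E N => fderiv ℝ g y (EuclideanSpace.single i 1)) := by
    filter_upwards [h.eventuallyEq_nhds] with y hy
    rw [hy.fderiv_eq]
  rw [h1.fderiv_eq]

lemma bilapl_cn (c a : ℝ) {x : E N} (hx : x ≠ 0) :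
    bilapl (fun y : E N => c * ‖y‖ ^ a) x
      = (c * (a * (a + N - 2)) * ((a - 2) * ((a - 2) + N - 2))) * ‖x‖ ^ (a - 4) := by
  unfold bilapl
  have hev : lapl (fun y : E N => c * ‖y‖ ^ a)
      =ᶠ[nhds x] fun y : E N => (c * (a * (a + N - 2))) * ‖y‖ ^ (a - 2) := by
    filter_upwards [IsOpen.mem_nhds isOpen_compl_singleton hx] with y hy
    exact lapl_cn c a hy
  rw [lapl_congr hev, lapl_cn _ _ hx]
  have h4 : a - 2 - 2 = a - 4 := by ring
  rw [h4]

end AuxLemmas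

/-- for `N ≥ 5` and supercritical `p > N/(N−4)`, the interval
`(4/(p−1), N−4)` is nonempty, and for any `m` in it and `M = m(m+2)(m−N+2)(m−N+4)`
one has `M > 0`, `Δ²(ε|x|^{−m}) = εM|x|^{−m−4}` for `x ≠ 0`; moreover, for `0 < ε`
with `ε^{p−1} < M`, the forcing term `f(x) = εM|x|^{−m−4} − ε^p|x|^{−mp}` is strictly
positive for `|x| ≥ 1`, the function `v(x) = ε|x|^{−m}` is a positive stationary
classical solution of `Δ²v = |v|^p + f` on `{|x| > 1}`, and `v = ε > 0` on the unit
sphere. -/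
theorem supercritical_stationary_solution
    (N : ℕ) (hN : 5 ≤ N) (p : ℝ) (hp : (N : ℝ) / ((N : ℝ) - 4) < p) :
    (4 / (p - 1) < (N : ℝ) - 4) ∧
    ∀ m : ℝ, 4 / (p - 1) < m → m < (N : ℝ) - 4 →
      (0 < m * (m + 2) * (m - N + 2) * (m - N + 4)) ∧
      (∀ ε : ℝ, 0 < ε → ∀ x : E N, x ≠ 0 →
        bilapl (fun y => ε * ‖y‖ ^ (-m)) x
          = ε * (m * (m + 2) * (m - N + 2) * (m - N + 4)) * ‖x‖ ^ (-m - 4)) ∧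
      (∀ ε : ℝ, 0 < ε → ε ^ (p - 1) < m * (m + 2) * (m - N + 2) * (m - N + 4) →
        (∀ x : E N, 1 ≤ ‖x‖ →
          0 < ε * (m * (m + 2) * (m - N + 2) * (m - N + 4)) * ‖x‖ ^ (-m - 4)
                - ε ^ p * ‖x‖ ^ (-(m * p))) ∧
        (∀ x : E N, 1 < ‖x‖ →
          0 < ε * ‖x‖ ^ (-m) ∧
          bilapl (fun y => ε * ‖y‖ ^ (-m)) x
            = |ε * ‖x‖ ^ (-m)| ^ p
              + (ε * (m * (m + 2) * (m - N + 2) * (m - N + 4)) * ‖x‖ ^ (-m - 4)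
                  - ε ^ p * ‖x‖ ^ (-(m * p)))) ∧
        (∀ x : E N, ‖x‖ = 1 → ε * ‖x‖ ^ (-m) = ε ∧ 0 < ε)) := by
  have hn : (5:ℝ) ≤ (N:ℝ) := by exact_mod_cast hN
  have hn4 : (0:ℝ) < (N:ℝ) - 4 := by linarith
  have hp1 : 1 < p := lt_trans ((one_lt_div hn4).mpr (by linarith)) hp
  have hp0 : 0 < p - 1 := by linarith
  have hNp : (N:ℝ) < p * ((N:ℝ) - 4) := (div_lt_iff₀ hn4).mp hp
  constructor
  · rw [div_lt_iff₀ hp0]; nlinarith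
  intro m hm1 hm2
  have hm0 : 0 < m := lt_trans (by positivity) hm1
  have hm4 : 4 < m * (p - 1) := (div_lt_iff₀ hp0).mp hm1
  have hMpos : 0 < m * (m + 2) * (m - (N:ℝ) + 2) * (m - (N:ℝ) + 4) := by
    have h1 : 0 < m * (m + 2) := by nlinarith
    have h2 : 0 < (m - (N:ℝ) + 2) * (m - (N:ℝ) + 4) :=
      mul_pos_of_neg_of_neg (by linarith) (by linarith)
    calc (0:ℝ) < m * (m + 2) * ((m - (N:ℝ) + 2) * (m - (N:ℝ) + 4)) := mul_pos h1 h2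
      _ = m * (m + 2) * (m - (N:ℝ) + 2) * (m - (N:ℝ) + 4) := by ring
  have hbilapl : ∀ ε : ℝ, ∀ x : E N, x ≠ 0 →
      bilapl (fun y => ε * ‖y‖ ^ (-m)) x
        = ε * (m * (m + 2) * (m - (N:ℝ) + 2) * (m - (N:ℝ) + 4)) * ‖x‖ ^ (-m - 4) := by
    intro ε x hx
    rw [bilapl_cn ε (-m) hx]
    congr 1
    ring
  refine ⟨hMpos, fun ε _ x hx => hbilapl ε x hx, ?_⟩
  intro ε hε hεM
  have hforce : ∀ x : E N, 1 ≤ ‖x‖ →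
      0 < ε * (m * (m + 2) * (m - (N:ℝ) + 2) * (m - (N:ℝ) + 4)) * ‖x‖ ^ (-m - 4)
        - ε ^ p * ‖x‖ ^ (-(m * p)) := by
    intro x hr1
    have hr0 : (0:ℝ) < ‖x‖ := lt_of_lt_of_le one_pos hr1
    have hexp : -(m * p) ≤ -m - 4 := by nlinarith
    have h1 : ‖x‖ ^ (-(m * p)) ≤ ‖x‖ ^ (-m - 4) :=
      Real.rpow_le_rpow_of_exponent_le hr1 hexp
    have hεp : ε ^ p = ε * ε ^ (p - 1) := by
      rw [show p = 1 + (p - 1) by ring, Real.rpow_add hε, Real.rpow_one]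
      ring_nf
    have h2 : ε ^ p < ε * (m * (m + 2) * (m - (N:ℝ) + 2) * (m - (N:ℝ) + 4)) := by
      rw [hεp]
      exact mul_lt_mul_of_pos_left hεM hε
    have hrp : 0 < ‖x‖ ^ (-m - 4) := Real.rpow_pos_of_pos hr0 _
    have hεpnn : 0 ≤ ε ^ p := Real.rpow_nonneg (le_of_lt hε) p
    have h3 : ε ^ p * ‖x‖ ^ (-(m * p)) ≤ ε ^ p * ‖x‖ ^ (-m - 4) :=
      mul_le_mul_of_nonneg_left h1 hεpnn
    nlinarith [mul_lt_mul_of_pos_right h2 hrp]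
  refine ⟨hforce, ?_, ?_⟩
  · intro x hx1
    have hr0 : (0:ℝ) < ‖x‖ := lt_trans one_pos hx1
    have hx : x ≠ 0 := by
      intro h; rw [h] at hx1; simp at hx1; linarith
    have hvpos : 0 < ε * ‖x‖ ^ (-m) := by positivity
    refine ⟨hvpos, ?_⟩
    rw [hbilapl ε x hx, abs_of_pos hvpos,
      Real.mul_rpow (le_of_lt hε) (Real.rpow_nonneg (norm_nonneg x) _),
      ← Real.rpow_mul (norm_nonneg x), show -m * p = -(m * p) by ring]
    ring
  · intro x hx1
    rw [hx1, Real.one_rpow, mul_one]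
    exact ⟨rfl, hε⟩
end
end

section
/- Let N ≥ 2, let ℓ ≥ 4 be a real number, and let ξ : ℝ → [0,1] be a C^∞ function with ξ(s) = 1 for 0 ≤ s ≤ 1, ξ(s) = 0 for s ≥ 2, and whose first four derivatives are bounded. Then there exists a constant C > 0 (depending only on ξ, ℓ and N) such that for every R > 0 and every x ∈ ℝ^N with R < |x| < 2R, the function x ↦ ξ(|x|/R)^ℓ satisfies |∇(Δ(ξ(|·|/R)^ℓ))(x)| ≤ C R^{−3} ξ(|x|/R)^{ℓ−4} and |Δ²(ξ(|·|/R)^ℓ)(x)| ≤ C R^{−4} ξ(|x|/R)^{ℓ−4}. -/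
open MeasureTheory Real Set

noncomputable section

section Aux
variable {N : ℕ}


def qf (N : ℕ) : E N → ℝ := fun y => ∑ i, y i ^ 2

lemma qf_hasFDerivAt (y : E N) : HasFDerivAt (qf N) (innerSL ℝ ((2:ℝ) • y)) y := by
  have h : HasFDerivAt (qf N) (∑ i, (2 * y i) • (EuclideanSpace.proj i : E N →L[ℝ] ℝ)) y := by
    apply HasFDerivAt.fun_sum
    intro i _
    have h1 : HasFDerivAt (fun z : E N => z i) (EuclideanSpace.proj i : E N →L[ℝ] ℝ) y :=
      (EuclideanSpace.proj (𝕜 := ℝ) i).hasFDerivAt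
    have h2 := h1.fun_mul h1
    have : HasFDerivAt (fun z : E N => z i ^ 2)
        ((y i) • (EuclideanSpace.proj i : E N →L[ℝ] ℝ) + (y i) • (EuclideanSpace.proj i : E N →L[ℝ] ℝ)) y := by
      simpa [pow_two] using h2
    exact this.congr_fderiv (by rw [← add_smul]; ring_nf)
  refine (h.congr_fderiv ?_)
  ext z
  simp [PiLp.inner_apply, Finset.mul_sum, mul_comm]
  congr 1; ext i; ring

lemma qf_eq_norm (y : E N) : qf N y = ‖y‖ ^ 2 := by
  rw [EuclideanSpace.norm_eq, Real.sq_sqrt (by positivity)]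
  simp [qf, sq_abs]

lemma hasFDerivAt_comp_qf (Φ Φ' : ℝ → ℝ) (h1 : ∀ s, HasDerivAt Φ (Φ' s) s) (c : ℝ) (y : E N) :
    HasFDerivAt (fun z => Φ (c * qf N z))
      (Φ' (c * qf N y) • (c • innerSL ℝ ((2:ℝ) • y))) y := by
  have hw : HasFDerivAt (fun z => c * qf N z) (c • innerSL ℝ ((2:ℝ) • y)) y :=
    (qf_hasFDerivAt y).const_mul c
  exact (h1 (c * qf N y)).comp_hasFDerivAt y hw

lemma fderiv_comp_qf_apply (Φ Φ' : ℝ → ℝ) (h1 : ∀ s, HasDerivAt Φ (Φ' s) s) (c : ℝ) (y : E N)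
    (i : Fin N) :
    fderiv ℝ (fun z => Φ (c * qf N z)) y (EuclideanSpace.single i 1)
      = Φ' (c * qf N y) * (2 * c * y i) := by
  rw [(hasFDerivAt_comp_qf Φ Φ' h1 c y).fderiv]
  simp [EuclideanSpace.inner_single_right, real_inner_smul_left]
  exact Or.inl (by ring)

lemma lapl_radial (Φ Φ' Φ'' : ℝ → ℝ) (h1 : ∀ s, HasDerivAt Φ (Φ' s) s)
    (h2 : ∀ s, HasDerivAt Φ' (Φ'' s) s) (c : ℝ) (x : E N) :
    lapl (fun y => Φ (c * qf N y)) x =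
      4 * c ^ 2 * qf N x * Φ'' (c * qf N x) + 2 * N * c * Φ' (c * qf N x) := by
  unfold lapl
  have key : ∀ i : Fin N,
      fderiv ℝ (fun y => fderiv ℝ (fun z => Φ (c * qf N z)) y (EuclideanSpace.single i 1)) x
        (EuclideanSpace.single i 1)
      = 4 * c ^ 2 * (x i) ^ 2 * Φ'' (c * qf N x) + 2 * c * Φ' (c * qf N x) := by
    intro i
    have heq : (fun y : E N => fderiv ℝ (fun z => Φ (c * qf N z)) y (EuclideanSpace.single i 1))
        = fun y => Φ' (c * qf N y) * (2 * c * y i) := by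
      funext y; exact fderiv_comp_qf_apply Φ Φ' h1 c y i
    rw [heq]
    have ha : HasFDerivAt (fun y : E N => Φ' (c * qf N y))
        (Φ'' (c * qf N x) • (c • innerSL ℝ ((2:ℝ) • x))) x :=
      hasFDerivAt_comp_qf Φ' Φ'' h2 c x
    have hb : HasFDerivAt (fun y : E N => 2 * c * y i)
        ((2 * c) • (EuclideanSpace.proj i : E N →L[ℝ] ℝ)) x :=
      ((EuclideanSpace.proj (𝕜 := ℝ) i).hasFDerivAt).const_mul (2 * c)
    rw [(ha.fun_mul hb).fderiv]
    simp [EuclideanSpace.single_apply, EuclideanSpace.inner_single_right, real_inner_smul_left]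
    all_goals first | tauto | ring
  rw [Finset.sum_congr rfl (fun i _ => key i)]
  rw [Finset.sum_add_distrib]
  simp only [Finset.sum_const, Finset.card_univ, Fintype.card_fin, nsmul_eq_mul,
    ← Finset.sum_mul, ← Finset.mul_sum]
  rw [show (∑ i : Fin N, x i ^ 2) = qf N x from rfl]
  ring

lemma grad_radial_norm (Φ Φ' : ℝ → ℝ) (h1 : ∀ s, HasDerivAt Φ (Φ' s) s) (c : ℝ) (x : E N) :
    ‖gradient (fun y => Φ (c * qf N y)) x‖ = |Φ' (c * qf N x)| * (2 * |c| * ‖x‖) := by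
  unfold gradient
  rw [(hasFDerivAt_comp_qf Φ Φ' h1 c x).fderiv, LinearIsometryEquiv.norm_map,
    norm_smul, norm_smul, innerSL_apply_norm, norm_smul]
  simp only [Real.norm_eq_abs, smul_eq_mul]
  rw [abs_two]
  ring

end Aux

lemma mulc {c x X : ℝ} (hc : 0 ≤ c) (hx : |x| ≤ X) : |c * x| ≤ c * X := by
  rw [abs_mul, abs_of_nonneg hc]
  exact mul_le_mul_of_nonneg_left hx hc


lemma rpow_mono_exp {b : ℝ} (hb0 : 0 ≤ b) (hb1 : b ≤ 1) {a c : ℝ} (hca : c ≤ a) (hc : 0 ≤ c) :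
    b ^ a ≤ b ^ c := by
  rcases eq_or_lt_of_le hb0 with h | h
  · rcases eq_or_lt_of_le hc with h0 | h0
    · rw [← h, ← h0, Real.rpow_zero]
      exact Real.rpow_le_one le_rfl (by linarith) (by linarith)
    · rw [← h, Real.zero_rpow (by linarith : a ≠ 0), Real.zero_rpow (ne_of_gt h0)]
  · exact Real.rpow_le_rpow_of_exponent_ge h hb1 hca

lemma tri {a b A B : ℝ} (ha : |a| ≤ A) (hb : |b| ≤ B) : |a + b| ≤ A + B :=
  (abs_add_le _ _).trans (add_le_add ha hb)

lemma mull {x c s M S : ℝ} (hx : |x| ≤ M) (hc : 0 ≤ c) (hs : |s| ≤ S) : |x * c * s| ≤ M * c * S := by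
  rw [abs_mul, abs_mul, abs_of_nonneg hc]
  have hM : 0 ≤ M := le_trans (abs_nonneg x) hx
  exact mul_le_mul (mul_le_mul_of_nonneg_right hx hc) hs (abs_nonneg _) (by positivity)

lemma absb {b : ℝ} (hb : 0 ≤ b) (a : ℝ) : |b ^ a| = b ^ a :=
  abs_of_nonneg (Real.rpow_nonneg hb a)

lemma oneD (ℓ : ℝ) (hℓ : 4 ≤ ℓ) (ξ : ℝ → ℝ)
    (hξ_smooth : ContDiff ℝ (⊤ : ℕ∞) ξ)
    (hξ_range : ∀ s, ξ s ∈ Icc (0 : ℝ) 1)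
    (hξ_one : ∀ s : ℝ, 0 ≤ s → s ≤ 1 → ξ s = 1) :
    ∃ F F1 F2 F3 F4 : ℝ → ℝ,
      (∀ u, F u = ξ (Real.sqrt u) ^ ℓ) ∧
      (∀ u, HasDerivAt F (F1 u) u) ∧
      (∀ u, HasDerivAt F1 (F2 u) u) ∧
      (∀ u, HasDerivAt F2 (F3 u) u) ∧
      (∀ u, HasDerivAt F3 (F4 u) u) ∧
      ∃ C > (0:ℝ), ∀ u ∈ Icc (1:ℝ) 4,
        |F2 u| ≤ C * ξ (Real.sqrt u) ^ (ℓ - 4) ∧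
        |F3 u| ≤ C * ξ (Real.sqrt u) ^ (ℓ - 4) ∧
        |F4 u| ≤ C * ξ (Real.sqrt u) ^ (ℓ - 4) := by
  set η : ℝ → ℝ := fun u => ξ (Real.sqrt u) with hηdef
  have hη_one : ∀ u : ℝ, u < 1 → η u = 1 := by
    intro u hu
    apply hξ_one _ (Real.sqrt_nonneg u)
    calc Real.sqrt u ≤ Real.sqrt 1 := Real.sqrt_le_sqrt hu.le
      _ = 1 := Real.sqrt_one
  have hηC : ContDiffOn ℝ 5 η (Ioi 0) := by
    intro u hu
    exact (((hξ_smooth.of_le (by exact_mod_cast ENat.natCast_le_of_coe_top_le_withTop le_rfl 5)).contDiffAt.comp u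
      (Real.contDiffAt_sqrt (ne_of_gt hu)))).contDiffWithinAt
  set e1 : ℝ → ℝ := deriv η with he1def
  set e2 : ℝ → ℝ := deriv e1 with he2def
  set e3 : ℝ → ℝ := deriv e2 with he3def
  set e4 : ℝ → ℝ := deriv e3 with he4def
  have h1C : ContDiffOn ℝ 4 e1 (Ioi 0) := hηC.deriv_of_isOpen isOpen_Ioi (by norm_num)
  have h2C : ContDiffOn ℝ 3 e2 (Ioi 0) := h1C.deriv_of_isOpen isOpen_Ioi (by norm_num)
  have h3C : ContDiffOn ℝ 2 e3 (Ioi 0) := h2C.deriv_of_isOpen isOpen_Ioi (by norm_num)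
  have h4C : ContDiffOn ℝ 1 e4 (Ioi 0) := h3C.deriv_of_isOpen isOpen_Ioi (by norm_num)
  have hz1 : ∀ u : ℝ, u < 1 → e1 u = 0 := by
    intro u hu
    have hev : η =ᶠ[nhds u] fun _ => (1:ℝ) := by
      filter_upwards [Iio_mem_nhds hu] with v hv using hη_one v hv
    rw [he1def, hev.deriv_eq, deriv_const]
  have hz2 : ∀ u : ℝ, u < 1 → e2 u = 0 := by
    intro u hu
    have hev : e1 =ᶠ[nhds u] fun _ => (0:ℝ) := by
      filter_upwards [Iio_mem_nhds hu] with v hv using hz1 v hv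
    rw [he2def, hev.deriv_eq, deriv_const]
  have hz3 : ∀ u : ℝ, u < 1 → e3 u = 0 := by
    intro u hu
    have hev : e2 =ᶠ[nhds u] fun _ => (0:ℝ) := by
      filter_upwards [Iio_mem_nhds hu] with v hv using hz2 v hv
    rw [he3def, hev.deriv_eq, deriv_const]
  have hz4 : ∀ u : ℝ, u < 1 → e4 u = 0 := by
    intro u hu
    have hev : e3 =ᶠ[nhds u] fun _ => (0:ℝ) := by
      filter_upwards [Iio_mem_nhds hu] with v hv using hz3 v hv
    rw [he4def, hev.deriv_eq, deriv_const]
  have hdη : ∀ u, HasDerivAt η (e1 u) u := by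
    intro u
    rcases lt_or_ge u 1 with h | h
    · have hev : η =ᶠ[nhds u] fun _ => (1:ℝ) := by
        filter_upwards [Iio_mem_nhds h] with v hv using hη_one v hv
      rw [hz1 u h]
      simpa using (hasDerivAt_const u (1:ℝ)).congr_of_eventuallyEq hev
    · have hu : (0:ℝ) < u := lt_of_lt_of_le one_pos h
      exact ((hηC.differentiableOn (by norm_num)).differentiableAt
        (Ioi_mem_nhds hu)).hasDerivAt
  have hd1 : ∀ u, HasDerivAt e1 (e2 u) u := by
    intro u
    rcases lt_or_ge u 1 with h | h
    · have hev : e1 =ᶠ[nhds u] fun _ => (0:ℝ) := by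
        filter_upwards [Iio_mem_nhds h] with v hv using hz1 v hv
      rw [hz2 u h]
      simpa using (hasDerivAt_const u (0:ℝ)).congr_of_eventuallyEq hev
    · have hu : (0:ℝ) < u := lt_of_lt_of_le one_pos h
      exact ((h1C.differentiableOn (by norm_num)).differentiableAt
        (Ioi_mem_nhds hu)).hasDerivAt
  have hd2 : ∀ u, HasDerivAt e2 (e3 u) u := by
    intro u
    rcases lt_or_ge u 1 with h | h
    · have hev : e2 =ᶠ[nhds u] fun _ => (0:ℝ) := by
        filter_upwards [Iio_mem_nhds h] with v hv using hz2 v hv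
      rw [hz3 u h]
      simpa using (hasDerivAt_const u (0:ℝ)).congr_of_eventuallyEq hev
    · have hu : (0:ℝ) < u := lt_of_lt_of_le one_pos h
      exact ((h2C.differentiableOn (by norm_num)).differentiableAt
        (Ioi_mem_nhds hu)).hasDerivAt
  have hd3 : ∀ u, HasDerivAt e3 (e4 u) u := by
    intro u
    rcases lt_or_ge u 1 with h | h
    · have hev : e3 =ᶠ[nhds u] fun _ => (0:ℝ) := by
        filter_upwards [Iio_mem_nhds h] with v hv using hz3 v hv
      rw [hz4 u h]
      simpa using (hasDerivAt_const u (0:ℝ)).congr_of_eventuallyEq hev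
    · have hu : (0:ℝ) < u := lt_of_lt_of_le one_pos h
      exact ((h3C.differentiableOn (by norm_num)).differentiableAt
        (Ioi_mem_nhds hu)).hasDerivAt
  -- bounds on the compact interval
  have hsub : Icc (1:ℝ) 4 ⊆ Ioi 0 := fun x hx => lt_of_lt_of_le one_pos hx.1
  have hbd : ∀ g : ℝ → ℝ, ContinuousOn g (Icc (1:ℝ) 4) →
      ∃ M : ℝ, 0 ≤ M ∧ ∀ u ∈ Icc (1:ℝ) 4, |g u| ≤ M := by
    intro g hg
    obtain ⟨M, hM⟩ := isCompact_Icc.exists_bound_of_continuousOn hg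
    exact ⟨max M 0, le_max_right _ _, fun u hu =>
      le_trans (by simpa using hM u hu) (le_max_left _ _)⟩
  obtain ⟨M1, hM10, hM1⟩ := hbd e1 (h1C.continuousOn.mono hsub)
  obtain ⟨M2, hM20, hM2⟩ := hbd e2 (h2C.continuousOn.mono hsub)
  obtain ⟨M3, hM30, hM3⟩ := hbd e3 (h3C.continuousOn.mono hsub)
  obtain ⟨M4, hM40, hM4⟩ := hbd e4 (h4C.continuousOn.mono hsub)
  set M : ℝ := max (max M1 M2) (max M3 M4) with hMdef
  have hM0 : 0 ≤ M := le_trans hM10 (le_trans le_sup_left le_sup_left)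
  have hMe1 : ∀ u ∈ Icc (1:ℝ) 4, |e1 u| ≤ M :=
    fun u hu => (hM1 u hu).trans (le_trans le_sup_left le_sup_left)
  have hMe2 : ∀ u ∈ Icc (1:ℝ) 4, |e2 u| ≤ M :=
    fun u hu => (hM2 u hu).trans (le_trans le_sup_right le_sup_left)
  have hMe3 : ∀ u ∈ Icc (1:ℝ) 4, |e3 u| ≤ M :=
    fun u hu => (hM3 u hu).trans (le_trans le_sup_left le_sup_right)
  have hMe4 : ∀ u ∈ Icc (1:ℝ) 4, |e4 u| ≤ M :=
    fun u hu => (hM4 u hu).trans (le_trans le_sup_right le_sup_right)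
  have hη0 : ∀ u, 0 ≤ η u := fun u => (hξ_range _).1
  have hη1' : ∀ u, η u ≤ 1 := fun u => (hξ_range _).2
  have hc0 : (0:ℝ) ≤ ℓ := by linarith
  have hc1 : (0:ℝ) ≤ ℓ - 1 := by linarith
  have hc2 : (0:ℝ) ≤ ℓ - 1 - 1 := by linarith
  have hc3 : (0:ℝ) ≤ ℓ - 1 - 1 - 1 := by linarith
  refine ⟨fun u => η u ^ ℓ,
    fun u => e1 u * ℓ * η u ^ (ℓ - 1),
    fun u => e2 u * ℓ * η u ^ (ℓ - 1) + e1 u * ℓ * (e1 u * (ℓ - 1) * η u ^ (ℓ - 1 - 1)),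
    fun u => (e3 u * ℓ * η u ^ (ℓ - 1) + e2 u * ℓ * (e1 u * (ℓ - 1) * η u ^ (ℓ - 1 - 1))) + (e2 u * ℓ * (e1 u * (ℓ - 1) * η u ^ (ℓ - 1 - 1)) + e1 u * ℓ * (e2 u * (ℓ - 1) * η u ^ (ℓ - 1 - 1) + e1 u * (ℓ - 1) * (e1 u * (ℓ - 1 - 1) * η u ^ (ℓ - 1 - 1 - 1)))),
    fun u => ((e4 u * ℓ * η u ^ (ℓ - 1) + e3 u * ℓ * (e1 u * (ℓ - 1) * η u ^ (ℓ - 1 - 1))) + (e3 u * ℓ * (e1 u * (ℓ - 1) * η u ^ (ℓ - 1 - 1)) + e2 u * ℓ * (e2 u * (ℓ - 1) * η u ^ (ℓ - 1 - 1) + e1 u * (ℓ - 1) * (e1 u * (ℓ - 1 - 1) * η u ^ (ℓ - 1 - 1 - 1))))) + ((e3 u * ℓ * (e1 u * (ℓ - 1) * η u ^ (ℓ - 1 - 1)) + e2 u * ℓ * (e2 u * (ℓ - 1) * η u ^ (ℓ - 1 - 1) + e1 u * (ℓ - 1) * (e1 u * (ℓ - 1 - 1) * η u ^ (ℓ - 1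 - 1 - 1)))) + (e2 u * ℓ * (e2 u * (ℓ - 1) * η u ^ (ℓ - 1 - 1) + e1 u * (ℓ - 1) * (e1 u * (ℓ - 1 - 1) * η u ^ (ℓ - 1 - 1 - 1))) + e1 u * ℓ * ((e3 u * (ℓ - 1) * η u ^ (ℓ - 1 - 1) + e2 u * (ℓ - 1) * (e1 u * (ℓ - 1 - 1) * η u ^ (ℓ - 1 - 1 - 1))) + (e2 u * (ℓ - 1) * (e1 u * (ℓ - 1 - 1) * η u ^ (ℓ - 1 - 1 - 1)) + e1 u * (ℓ - 1) * (e2 u * (ℓ - 1 - 1) * η u ^ (ℓ - 1 - 1 - 1) + e1 u * (ℓ - 1 - 1) * (e1 u * (ℓ - 1 - 1 - 1) * η u ^ (ℓ - 1 - 1 - 1 - 1))))))),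
    fun u => rfl, ?_, ?_, ?_, ?_, ?_⟩
  · exact fun u => (hdη u).rpow_const (Or.inr (by linarith))
  · exact fun u => ((hd1 u).mul_const ℓ).mul ((hdη u).rpow_const (Or.inr (by linarith)))
  · intro u
    exact (((hd2 u).mul_const ℓ).mul ((hdη u).rpow_const (Or.inr (by linarith)))).add
      (((hd1 u).mul_const ℓ).mul
        (((hd1 u).mul_const (ℓ - 1)).mul ((hdη u).rpow_const (Or.inr (by linarith)))))
  · intro u
    have hg1 := (hdη u).rpow_const (Or.inr (by linarith : 1 ≤ ℓ - 1))
    have hInner := ((hd1 u).mul_const (ℓ - 1)).mul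
      ((hdη u).rpow_const (Or.inr (by linarith : 1 ≤ ℓ - 1 - 1)))
    have hW := ((hd1 u).mul_const (ℓ - 1 - 1)).mul
      ((hdη u).rpow_const (Or.inr (by linarith : 1 ≤ ℓ - 1 - 1 - 1)))
    have hInner2 := (((hd2 u).mul_const (ℓ - 1)).mul
        ((hdη u).rpow_const (Or.inr (by linarith : 1 ≤ ℓ - 1 - 1)))).add
      (((hd1 u).mul_const (ℓ - 1)).mul hW)
    exact ((((hd3 u).mul_const ℓ).mul hg1).add (((hd2 u).mul_const ℓ).mul hInner)).add
      ((((hd2 u).mul_const ℓ).mul hInner).add (((hd1 u).mul_const ℓ).mul hInner2))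
  · have hco2 : (0:ℝ) ≤ M * ℓ + M * ℓ * (M * (ℓ - 1)) := by
      repeat' first | assumption | apply add_nonneg | apply mul_nonneg
    have hco3 : (0:ℝ) ≤ (M * ℓ + M * ℓ * (M * (ℓ - 1))) + (M * ℓ * (M * (ℓ - 1)) + M * ℓ * (M * (ℓ - 1) + M * (ℓ - 1) * (M * (ℓ - 1 - 1)))) := by
      repeat' first | assumption | apply add_nonneg | apply mul_nonneg
    have hco4 : (0:ℝ) ≤ ((M * ℓ + M * ℓ * (M * (ℓ - 1))) + (M * ℓ * (M * (ℓ - 1)) + M * ℓ * (M * (ℓ - 1) + M * (ℓ - 1) * (M * (ℓ - 1 - 1))))) + ((M * ℓ * (M * (ℓ - 1)) + M * ℓ * (M * (ℓ - 1) + M * (ℓ - 1) * (M * (ℓ - 1 - 1)))) + (M * ℓ * (M * (ℓ - 1) + M * (ℓ - 1) * (M * (ℓ - 1 - 1))) + M * ℓ * ((M * (ℓ - 1) + M * (ℓ - 1) * (M * (ℓ - 1 - 1))) + (M * (ℓ - 1) * (M * (ℓ - 1 - 1)) + M * (ℓ - 1) * (M * (ℓ - 1 - 1) + M * (ℓ -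 1 - 1) * (M * (ℓ - 1 - 1 - 1))))))) := by
      repeat' first | assumption | apply add_nonneg | apply mul_nonneg
    refine ⟨(M * ℓ + M * ℓ * (M * (ℓ - 1))) + (((M * ℓ + M * ℓ * (M * (ℓ - 1))) + (M * ℓ * (M * (ℓ - 1)) + M * ℓ * (M * (ℓ - 1) + M * (ℓ - 1) * (M * (ℓ - 1 - 1)))))) + ((((M * ℓ + M * ℓ * (M * (ℓ - 1))) + (M * ℓ * (M * (ℓ - 1)) + M * ℓ * (M * (ℓ - 1) + M * (ℓ - 1) * (M * (ℓ - 1 - 1))))) + ((M * ℓ * (M * (ℓ - 1)) + M * ℓ * (M * (ℓ - 1) + M * (ℓ - 1) * (M * (ℓ - 1 - 1)))) + (M * ℓ * (M * (ℓ - 1) + M * (ℓ - 1) * (M * (ℓ - 1 - 1))) + M * ℓ * ((M * (ℓ - 1) + M * (ℓ - 1) * (M * (ℓ - 1 - 1))) + (M * (ℓ - 1) * (M * (ℓ - 1 - 1)) + M * (ℓ - 1) * (M * (ℓ - 1 - 1) + M * (ℓ - 1 - 1) * (M * (ℓ - 1 - 1 - 1))))))))) + 1, by linarith, ?_⟩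
    intro u hu
    set β : ℝ := ξ (Real.sqrt u) ^ (ℓ - 4) with hβdef
    have hβ0 : 0 ≤ β := Real.rpow_nonneg (hη0 u) _
    have hg1b : |η u ^ (ℓ - 1)| ≤ β := by
      rw [absb (hη0 u)]; exact rpow_mono_exp (hη0 u) (hη1' u) (by linarith) (by linarith)
    have hg2b : |η u ^ (ℓ - 1 - 1)| ≤ β := by
      rw [absb (hη0 u)]; exact rpow_mono_exp (hη0 u) (hη1' u) (by linarith) (by linarith)
    have hg3b : |η u ^ (ℓ - 1 - 1 - 1)| ≤ β := by
      rw [absb (hη0 u)]; exact rpow_mono_exp (hη0 u) (hη1' u) (by linarith) (by linarith)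
    have hg4b : |η u ^ (ℓ - 1 - 1 - 1 - 1)| ≤ β := by
      rw [absb (hη0 u)]; exact rpow_mono_exp (hη0 u) (hη1' u) (by linarith) (by linarith)
    have bIV : |(e2 u * (ℓ - 1) * η u ^ (ℓ - 1 - 1) + e1 u * (ℓ - 1) * (e1 u * (ℓ - 1 - 1) * η u ^ (ℓ - 1 - 1 - 1)))| ≤ (M * (ℓ - 1) * β + M * (ℓ - 1) * (M * (ℓ - 1 - 1) * β)) :=
      tri (mull (hMe2 u hu) hc1 hg2b) (mull (hMe1 u hu) hc1 (mull (hMe1 u hu) hc2 hg3b))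
    have bIV2p : |((e3 u * (ℓ - 1) * η u ^ (ℓ - 1 - 1) + e2 u * (ℓ - 1) * (e1 u * (ℓ - 1 - 1) * η u ^ (ℓ - 1 - 1 - 1))) + (e2 u * (ℓ - 1) * (e1 u * (ℓ - 1 - 1) * η u ^ (ℓ - 1 - 1 - 1)) + e1 u * (ℓ - 1) * (e2 u * (ℓ - 1 - 1) * η u ^ (ℓ - 1 - 1 - 1) + e1 u * (ℓ - 1 - 1) * (e1 u * (ℓ - 1 - 1 - 1) * η u ^ (ℓ - 1 - 1 - 1 - 1)))))| ≤ ((M * (ℓ - 1) * β + M * (ℓ - 1) * (M * (ℓ - 1 - 1) * β)) + (M * (ℓ - 1) * (M * (ℓ - 1 - 1) * β) + M * (ℓ - 1) * (M * (ℓ - 1 - 1) * β + M * (ℓ - 1 - 1) * (M * (ℓ - 1 - 1 - 1) * β)))) :=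
      tri (tri (mull (hMe3 u hu) hc1 hg2b) (mull (hMe2 u hu) hc1 (mull (hMe1 u hu) hc2 hg3b)))
        (tri (mull (hMe2 u hu) hc1 (mull (hMe1 u hu) hc2 hg3b))
          (mull (hMe1 u hu) hc1
            (tri (mull (hMe2 u hu) hc2 hg3b) (mull (hMe1 u hu) hc2 (mull (hMe1 u hu) hc3 hg4b)))))
    refine ⟨?_, ?_, ?_⟩
    · calc |e2 u * ℓ * η u ^ (ℓ - 1) + e1 u * ℓ * (e1 u * (ℓ - 1) * η u ^ (ℓ - 1 - 1))| ≤ M * ℓ * β + M * ℓ * (M * (ℓ - 1) * β) :=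
            tri (mull (hMe2 u hu) hc0 hg1b) (mull (hMe1 u hu) hc0 (mull (hMe1 u hu) hc1 hg2b))
        _ = (M * ℓ + M * ℓ * (M * (ℓ - 1))) * β := by ring
        _ ≤ ((M * ℓ + M * ℓ * (M * (ℓ - 1))) + (((M * ℓ + M * ℓ * (M * (ℓ - 1))) + (M * ℓ * (M * (ℓ - 1)) + M * ℓ * (M * (ℓ - 1) + M * (ℓ - 1) * (M * (ℓ - 1 - 1)))))) + ((((M * ℓ + M * ℓ * (M * (ℓ - 1))) + (M * ℓ * (M * (ℓ - 1)) + M * ℓ * (M * (ℓ - 1) + M * (ℓ - 1) * (M * (ℓ - 1 - 1))))) + ((M * ℓ * (M * (ℓ - 1)) + M * ℓ * (M * (ℓ - 1) + M * (ℓ - 1) * (M * (ℓ - 1 - 1)))) + (M * ℓ * (M * (ℓ - 1) + M * (ℓ - 1) * (M * (ℓ - 1 - 1))) + M * ℓ * ((M * (ℓ - 1) + M * (ℓ - 1) * (M * (ℓ - 1 - 1))) + (M * (ℓ - 1) * (M * (ℓ - 1 - 1)) + M * (ℓ - 1) * (M * (ℓ - 1 - 1) + M * (ℓ - 1 - 1)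 * (M * (ℓ - 1 - 1 - 1))))))))) + 1) * β := by
            apply mul_le_mul_of_nonneg_right _ hβ0; linarith
    · calc |(e3 u * ℓ * η u ^ (ℓ - 1) + e2 u * ℓ * (e1 u * (ℓ - 1) * η u ^ (ℓ - 1 - 1))) + (e2 u * ℓ * (e1 u * (ℓ - 1) * η u ^ (ℓ - 1 - 1)) + e1 u * ℓ * (e2 u * (ℓ - 1) * η u ^ (ℓ - 1 - 1) + e1 u * (ℓ - 1) * (e1 u * (ℓ - 1 - 1) * η u ^ (ℓ - 1 - 1 - 1))))| ≤ (M * ℓ * β + M * ℓ * (M * (ℓ - 1) * β)) + (M * ℓ * (M * (ℓ - 1) * β) + M * ℓ * (M * (ℓ - 1) * β + M * (ℓ - 1) * (M * (ℓ - 1 - 1) * β))) :=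
            tri (tri (mull (hMe3 u hu) hc0 hg1b)
                (mull (hMe2 u hu) hc0 (mull (hMe1 u hu) hc1 hg2b)))
              (tri (mull (hMe2 u hu) hc0 (mull (hMe1 u hu) hc1 hg2b))
                (mull (hMe1 u hu) hc0 bIV))
        _ = ((M * ℓ + M * ℓ * (M * (ℓ - 1))) + (M * ℓ * (M * (ℓ - 1)) + M * ℓ * (M * (ℓ - 1) + M * (ℓ - 1) * (M * (ℓ - 1 - 1))))) * β := by ring
        _ ≤ ((M * ℓ + M * ℓ * (M * (ℓ - 1))) + (((M * ℓ + M * ℓ * (M * (ℓ - 1))) + (M * ℓ * (M * (ℓ - 1)) + M * ℓ * (M * (ℓ - 1) + M * (ℓ - 1) * (M * (ℓ - 1 - 1)))))) + ((((M * ℓ + M * ℓ * (M * (ℓ - 1))) + (M * ℓ * (M * (ℓ - 1)) + M * ℓ * (M * (ℓ - 1) + M * (ℓ - 1) * (M * (ℓ - 1 - 1))))) + ((M * ℓ * (M * (ℓ - 1)) + M * ℓ * (M * (ℓ - 1) + M * (ℓ - 1) * (M * (ℓ - 1 - 1)))) + (M * ℓ * (M * (ℓ - 1) + M * (ℓ -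 1) * (M * (ℓ - 1 - 1))) + M * ℓ * ((M * (ℓ - 1) + M * (ℓ - 1) * (M * (ℓ - 1 - 1))) + (M * (ℓ - 1) * (M * (ℓ - 1 - 1)) + M * (ℓ - 1) * (M * (ℓ - 1 - 1) + M * (ℓ - 1 - 1) * (M * (ℓ - 1 - 1 - 1))))))))) + 1) * β := by
            apply mul_le_mul_of_nonneg_right _ hβ0; linarith
    · calc |((e4 u * ℓ * η u ^ (ℓ - 1) + e3 u * ℓ * (e1 u * (ℓ - 1) * η u ^ (ℓ - 1 - 1))) + (e3 u * ℓ * (e1 u * (ℓ - 1) * η u ^ (ℓ - 1 - 1)) + e2 u * ℓ * (e2 u * (ℓ - 1) * η u ^ (ℓ - 1 - 1) + e1 u * (ℓ - 1) * (e1 u * (ℓ - 1 - 1) * η u ^ (ℓ - 1 - 1 - 1))))) + ((e3 u * ℓ * (e1 u * (ℓ - 1) * η u ^ (ℓ - 1 - 1)) + e2 u * ℓ * (e2 u * (ℓ - 1) * η u ^ (ℓ - 1 - 1) + e1 u * (ℓ - 1) * (e1 u * (ℓ - 1 - 1) * η u ^ (ℓ - 1 - 1 - 1)))) + (e2 u *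 ℓ * (e2 u * (ℓ - 1) * η u ^ (ℓ - 1 - 1) + e1 u * (ℓ - 1) * (e1 u * (ℓ - 1 - 1) * η u ^ (ℓ - 1 - 1 - 1))) + e1 u * ℓ * ((e3 u * (ℓ - 1) * η u ^ (ℓ - 1 - 1) + e2 u * (ℓ - 1) * (e1 u * (ℓ - 1 - 1) * η u ^ (ℓ - 1 - 1 - 1))) + (e2 u * (ℓ - 1) * (e1 u * (ℓ - 1 - 1) * η u ^ (ℓ - 1 - 1 - 1)) + e1 u * (ℓ - 1) * (e2 u * (ℓ - 1 - 1) * η u ^ (ℓ - 1 - 1 - 1) + e1 u * (ℓ - 1 - 1) * (e1 u * (ℓ - 1 - 1 - 1) * η u ^ (ℓ - 1 - 1 - 1 - 1)))))))| ≤ ((M * ℓ * β + M * ℓ * (M * (ℓ - 1) * β)) + (M * ℓ * (M * (ℓ - 1) * β) + M * ℓ * (M * (ℓ - 1) * β + M * (ℓ - 1) * (M * (ℓ - 1 - 1) * β)))) + ((M * ℓ * (M * (ℓ - 1) * β) + M * ℓ * (M * (ℓ - 1) * β + M * (ℓ - 1) * (M * (ℓ - 1 - 1) * β))) + (M * ℓ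 * (M * (ℓ - 1) * β + M * (ℓ - 1) * (M * (ℓ - 1 - 1) * β)) + M * ℓ * ((M * (ℓ - 1) * β + M * (ℓ - 1) * (M * (ℓ - 1 - 1) * β)) + (M * (ℓ - 1) * (M * (ℓ - 1 - 1) * β) + M * (ℓ - 1) * (M * (ℓ - 1 - 1) * β + M * (ℓ - 1 - 1) * (M * (ℓ - 1 - 1 - 1) * β)))))) :=
            tri (tri (tri (mull (hMe4 u hu) hc0 hg1b)
                  (mull (hMe3 u hu) hc0 (mull (hMe1 u hu) hc1 hg2b)))
                (tri (mull (hMe3 u hu) hc0 (mull (hMe1 u hu) hc1 hg2b))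
                  (mull (hMe2 u hu) hc0 bIV)))
              (tri (tri (mull (hMe3 u hu) hc0 (mull (hMe1 u hu) hc1 hg2b))
                  (mull (hMe2 u hu) hc0 bIV))
                (tri (mull (hMe2 u hu) hc0 bIV) (mull (hMe1 u hu) hc0 bIV2p)))
        _ = (((M * ℓ + M * ℓ * (M * (ℓ - 1))) + (M * ℓ * (M * (ℓ - 1)) + M * ℓ * (M * (ℓ - 1) + M * (ℓ - 1) * (M * (ℓ - 1 - 1))))) + ((M * ℓ * (M * (ℓ - 1)) + M * ℓ * (M * (ℓ - 1) + M * (ℓ - 1) * (M * (ℓ - 1 - 1)))) + (M * ℓ * (M * (ℓ - 1) + M * (ℓ - 1) * (M * (ℓ - 1 - 1))) + M * ℓ * ((M * (ℓ - 1) + M * (ℓ - 1) * (M * (ℓ - 1 - 1))) + (M * (ℓ - 1) * (M * (ℓ - 1 - 1)) + M * (ℓ - 1) * (M * (ℓ - 1 - 1) + M * (ℓ - 1 - 1) * (M * (ℓ - 1 - 1 - 1)))))))) * β := by ring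
        _ ≤ ((M * ℓ + M * ℓ * (M * (ℓ - 1))) + (((M * ℓ + M * ℓ * (M * (ℓ - 1))) + (M * ℓ * (M * (ℓ - 1)) + M * ℓ * (M * (ℓ - 1) + M * (ℓ - 1) * (M * (ℓ - 1 - 1)))))) + ((((M * ℓ + M * ℓ * (M * (ℓ - 1))) + (M * ℓ * (M * (ℓ - 1)) + M * ℓ * (M * (ℓ - 1) + M * (ℓ - 1) * (M * (ℓ - 1 - 1))))) + ((M * ℓ * (M * (ℓ - 1)) + M * ℓ * (M * (ℓ - 1) + M * (ℓ - 1) * (M * (ℓ - 1 - 1)))) + (M * ℓ * (M * (ℓ - 1) + M * (ℓ - 1) * (M * (ℓ - 1 - 1))) + M * ℓ * ((M * (ℓ - 1) + M * (ℓ - 1) * (M * (ℓ - 1 - 1))) + (M * (ℓ - 1) * (M * (ℓ - 1 - 1)) + M * (ℓ - 1) * (M * (ℓ - 1 - 1) + M * (ℓ - 1 - 1) * (M * (ℓ - 1 - 1 - 1))))))))) + 1) * β := by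
            apply mul_le_mul_of_nonneg_right _ hβ0; linarith

/-- derivative estimates for the rescaled cut-off
`x ↦ ξ(|x|/R)^ℓ` on the annulus `R < |x| < 2R`:
`|∇(Δ(ξ(|·|/R)^ℓ))(x)| ≤ CR⁻³ ξ(|x|/R)^{ℓ−4}` and
`|Δ²(ξ(|·|/R)^ℓ)(x)| ≤ CR⁻⁴ ξ(|x|/R)^{ℓ−4}`. -/
theorem cutoff_estimates
    (N : ℕ) (hN : 2 ≤ N) (ℓ : ℝ) (hℓ : 4 ≤ ℓ)
    (ξ : ℝ → ℝ)
    (hξ_smooth : ContDiff ℝ (⊤ : ℕ∞) ξ)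
    (hξ_range : ∀ s, ξ s ∈ Icc (0 : ℝ) 1)
    (hξ_one : ∀ s : ℝ, 0 ≤ s → s ≤ 1 → ξ s = 1)
    (hξ_zero : ∀ s : ℝ, 2 ≤ s → ξ s = 0)
    (hξ_bdd : ∀ k : ℕ, 1 ≤ k → k ≤ 4 → ∃ C : ℝ, ∀ s, |iteratedDeriv k ξ s| ≤ C) :
    ∃ C > (0 : ℝ), ∀ R : ℝ, 0 < R → ∀ x : E N, R < ‖x‖ → ‖x‖ < 2 * R →
      ‖gradient (lapl (fun y : E N => ξ (‖y‖ / R) ^ ℓ)) x‖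
        ≤ C * R ^ ((-3 : ℝ)) * ξ (‖x‖ / R) ^ (ℓ - 4) ∧
      |bilapl (fun y : E N => ξ (‖y‖ / R) ^ ℓ) x|
        ≤ C * R ^ ((-4 : ℝ)) * ξ (‖x‖ / R) ^ (ℓ - 4) := by
  obtain ⟨F, F1, F2, F3, F4, hFval, hdF, hdF1, hdF2, hdF3, C1, hC1pos, hC1⟩ :=
    oneD ℓ hℓ ξ hξ_smooth hξ_range hξ_one
  set G : ℝ → ℝ := fun s => 4 * s * F2 s + 2 * (N:ℝ) * F1 s with hGdef
  set G1 : ℝ → ℝ := fun s => 4 * 1 * F2 s + 4 * s * F3 s + 2 * (N:ℝ) * F2 s with hG1def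
  set G2 : ℝ → ℝ := fun s => 4 * 1 * F3 s + (4 * 1 * F3 s + 4 * s * F4 s) + 2 * (N:ℝ) * F3 s
    with hG2def
  have hG : ∀ s, HasDerivAt G (G1 s) s := by
    intro s
    exact ((HasDerivAt.const_mul (4:ℝ) (hasDerivAt_id' _)).mul (hdF2 s)).add
      ((hdF1 s).const_mul (2 * (N:ℝ)))
  have hG1 : ∀ s, HasDerivAt G1 (G2 s) s := by
    intro s
    exact (((hdF2 s).const_mul (4 * 1 : ℝ)).add
      ((HasDerivAt.const_mul (4:ℝ) (hasDerivAt_id' _)).mul (hdF3 s))).add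
      ((hdF2 s).const_mul (2 * (N:ℝ)))
  refine ⟨4 * (20 + 2*(N:ℝ)) * C1 + (16 * (24 + 2*(N:ℝ)) * C1 + 2*(N:ℝ) * ((20 + 2*(N:ℝ)) * C1)) + 1,
    by positivity, ?_⟩
  intro R hR x hx1 hx2
  have hR0 : R ≠ 0 := ne_of_gt hR
  have ht1 : 1 < ‖x‖ / R := (one_lt_div hR).mpr hx1
  have ht2 : ‖x‖ / R < 2 := (div_lt_iff₀ hR).mpr (by linarith)
  have ht0 : 0 ≤ ‖x‖ / R := by positivity
  have hwx : ∀ y : E N, (R^2)⁻¹ * qf N y = (‖y‖ / R)^2 := by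
    intro y
    rw [qf_eq_norm, div_pow]
    field_simp
  have hsqrt : ∀ y : E N, Real.sqrt ((R^2)⁻¹ * qf N y) = ‖y‖ / R := by
    intro y
    rw [hwx y]
    exact Real.sqrt_sq (by positivity)
  have hsx : (R^2)⁻¹ * qf N x ∈ Icc (1:ℝ) 4 := by
    rw [hwx x]
    constructor
    · nlinarith
    · nlinarith
  have hfun : (fun y : E N => ξ (‖y‖ / R) ^ ℓ) = fun y => F ((R^2)⁻¹ * qf N y) := by
    funext y
    rw [hFval, hsqrt y]
  have hlapl : lapl (fun y : E N => ξ (‖y‖ / R) ^ ℓ)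
      = fun y => (R^2)⁻¹ * G ((R^2)⁻¹ * qf N y) := by
    funext y
    rw [hfun, lapl_radial F F1 F2 hdF hdF1 ((R^2)⁻¹) y]
    simp only [hGdef]
    ring
  obtain ⟨hb2, hb3, hb4⟩ := hC1 ((R^2)⁻¹ * qf N x) hsx
  rw [hsqrt x] at hb2 hb3 hb4
  set β : ℝ := ξ (‖x‖ / R) ^ (ℓ - 4) with hβdef
  have hβ0 : 0 ≤ β := Real.rpow_nonneg (hξ_range _).1 _
  have hCβ0 : 0 ≤ C1 * β := mul_nonneg hC1pos.le hβ0
  have hsx1 : (1:ℝ) ≤ (R^2)⁻¹ * qf N x := hsx.1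
  have hsx4 : (R^2)⁻¹ * qf N x ≤ 4 := hsx.2
  have hG1b : |G1 ((R^2)⁻¹ * qf N x)| ≤ (20 + 2*(N:ℝ)) * C1 * β := by
    have h1 : |G1 ((R^2)⁻¹ * qf N x)| ≤
        4 * 1 * (C1 * β) + 4 * ((R^2)⁻¹ * qf N x) * (C1 * β) + 2 * (N:ℝ) * (C1 * β) := by
      simp only [hG1def]
      refine tri (tri (mulc (by norm_num) hb2) (mulc (by linarith) hb3)) (mulc (by positivity) hb2)
    nlinarith [mul_nonneg hCβ0 (by linarith : (0:ℝ) ≤ 4 - (R^2)⁻¹ * qf N x)]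
  have hG2b : |G2 ((R^2)⁻¹ * qf N x)| ≤ (24 + 2*(N:ℝ)) * C1 * β := by
    have h1 : |G2 ((R^2)⁻¹ * qf N x)| ≤
        4 * 1 * (C1 * β) + (4 * 1 * (C1 * β) + 4 * ((R^2)⁻¹ * qf N x) * (C1 * β))
          + 2 * (N:ℝ) * (C1 * β) := by
      simp only [hG2def]
      refine tri (tri (mulc (by norm_num) hb3)
        (tri (mulc (by norm_num) hb3) (mulc (by linarith) hb4))) (mulc (by positivity) hb3)
    nlinarith [mul_nonneg hCβ0 (by linarith : (0:ℝ) ≤ 4 - (R^2)⁻¹ * qf N x)]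
  have hRm3 : R ^ ((-3:ℝ)) = (R^3)⁻¹ := by
    rw [Real.rpow_neg hR.le, show ((3:ℝ)) = ((3:ℕ):ℝ) by norm_num, Real.rpow_natCast]
  have hRm4 : R ^ ((-4:ℝ)) = (R^4)⁻¹ := by
    rw [Real.rpow_neg hR.le, show ((4:ℝ)) = ((4:ℕ):ℝ) by norm_num, Real.rpow_natCast]
  constructor
  · -- gradient estimate
    have hgrad : ‖gradient (lapl (fun y : E N => ξ (‖y‖ / R) ^ ℓ)) x‖
        = |(R^2)⁻¹ * G1 ((R^2)⁻¹ * qf N x)| * (2 * |(R^2)⁻¹| * ‖x‖) := by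
      rw [hlapl]
      exact grad_radial_norm (fun s => (R^2)⁻¹ * G s) (fun s => (R^2)⁻¹ * G1 s)
        (fun s => (hG s).const_mul ((R^2)⁻¹)) ((R^2)⁻¹) x
    rw [hgrad, hRm3]
    simp only [abs_mul, abs_of_nonneg (by positivity : (0:ℝ) ≤ (R^2)⁻¹)]
    calc (R^2)⁻¹ * |G1 ((R^2)⁻¹ * qf N x)| * (2 * (R^2)⁻¹ * ‖x‖)
        ≤ (R^2)⁻¹ * ((20 + 2*(N:ℝ)) * C1 * β) * (2 * (R^2)⁻¹ * (2*R)) := by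
          have hn : 0 ≤ (20 + 2*(N:ℝ)) * C1 * β := by positivity
          apply mul_le_mul
          · exact mul_le_mul_of_nonneg_left hG1b (by positivity)
          · have : ‖x‖ ≤ 2*R := hx2.le
            apply mul_le_mul_of_nonneg_left this (by positivity)
          · positivity
          · positivity
      _ = (4 * (20 + 2*(N:ℝ)) * C1) * (R^3)⁻¹ * β := by
          field_simp
          ring
      _ ≤ (4 * (20 + 2*(N:ℝ)) * C1 + (16 * (24 + 2*(N:ℝ)) * C1
            + 2*(N:ℝ) * ((20 + 2*(N:ℝ)) * C1)) + 1) * (R^3)⁻¹ * β := by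
          have h0 : (0:ℝ) ≤ (R^3)⁻¹ := by positivity
          have hcomp : 4 * (20 + 2*(N:ℝ)) * C1 ≤ 4 * (20 + 2*(N:ℝ)) * C1
              + (16 * (24 + 2*(N:ℝ)) * C1 + 2*(N:ℝ) * ((20 + 2*(N:ℝ)) * C1)) + 1 := by
            have : (0:ℝ) ≤ 16 * (24 + 2*(N:ℝ)) * C1 + 2*(N:ℝ) * ((20 + 2*(N:ℝ)) * C1) := by
              positivity
            linarith
          exact mul_le_mul_of_nonneg_right
            (mul_le_mul_of_nonneg_right hcomp h0) hβ0
  · -- bilaplacian estimate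
    have hbil : bilapl (fun y : E N => ξ (‖y‖ / R) ^ ℓ) x
        = ((R^2)⁻¹)^2 * (4 * ((R^2)⁻¹ * qf N x) * G2 ((R^2)⁻¹ * qf N x)
            + 2 * (N:ℝ) * G1 ((R^2)⁻¹ * qf N x)) := by
      rw [bilapl, hlapl]
      rw [lapl_radial (fun s => (R^2)⁻¹ * G s) (fun s => (R^2)⁻¹ * G1 s)
        (fun s => (R^2)⁻¹ * G2 s) (fun s => (hG s).const_mul ((R^2)⁻¹))
        (fun s => (hG1 s).const_mul ((R^2)⁻¹)) ((R^2)⁻¹) x]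
      ring
    rw [hbil, hRm4, abs_mul, abs_of_nonneg (by positivity : (0:ℝ) ≤ ((R^2)⁻¹)^2)]
    have hinner : |4 * ((R^2)⁻¹ * qf N x) * G2 ((R^2)⁻¹ * qf N x)
        + 2 * (N:ℝ) * G1 ((R^2)⁻¹ * qf N x)|
        ≤ 16 * ((24 + 2*(N:ℝ)) * C1 * β) + 2 * (N:ℝ) * ((20 + 2*(N:ℝ)) * C1 * β) := by
      refine tri ?_ (mulc (by positivity) hG1b)
      rw [abs_mul, abs_of_nonneg (by linarith : (0:ℝ) ≤ 4 * ((R^2)⁻¹ * qf N x))]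
      have h16 : 4 * ((R^2)⁻¹ * qf N x) ≤ 16 := by linarith
      exact mul_le_mul h16 hG2b (abs_nonneg _) (by norm_num)
    calc ((R^2)⁻¹)^2 * |4 * ((R^2)⁻¹ * qf N x) * G2 ((R^2)⁻¹ * qf N x)
          + 2 * (N:ℝ) * G1 ((R^2)⁻¹ * qf N x)|
        ≤ ((R^2)⁻¹)^2 * (16 * ((24 + 2*(N:ℝ)) * C1 * β)
            + 2 * (N:ℝ) * ((20 + 2*(N:ℝ)) * C1 * β)) :=
          mul_le_mul_of_nonneg_left hinner (by positivity)
      _ = (16 * (24 + 2*(N:ℝ)) * C1 + 2*(N:ℝ) * ((20 + 2*(N:ℝ)) * C1)) * (R^4)⁻¹ * β := by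
          field_simp
      _ ≤ (4 * (20 + 2*(N:ℝ)) * C1 + (16 * (24 + 2*(N:ℝ)) * C1
            + 2*(N:ℝ) * ((20 + 2*(N:ℝ)) * C1)) + 1) * (R^4)⁻¹ * β := by
          have h0 : (0:ℝ) ≤ (R^4)⁻¹ := by positivity
          have hcomp : 16 * (24 + 2*(N:ℝ)) * C1 + 2*(N:ℝ) * ((20 + 2*(N:ℝ)) * C1)
              ≤ 4 * (20 + 2*(N:ℝ)) * C1 + (16 * (24 + 2*(N:ℝ)) * C1
                + 2*(N:ℝ) * ((20 + 2*(N:ℝ)) * C1)) + 1 := by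
            have : (0:ℝ) ≤ 4 * (20 + 2*(N:ℝ)) * C1 := by positivity
            linarith
          exact mul_le_mul_of_nonneg_right
            (mul_le_mul_of_nonneg_right hcomp h0) hβ0
end
end

section
/- Let N ≥ 2, p > 1, p' = p/(p−1), and let ℓ ≥ 4p' be a real number. Let ζ : ℝ → [0,1] be a C^∞ function with ζ(s) = 1 for 0 ≤ s ≤ 1/2 and ζ(s) = 0 for s ≥ 1, and let ξ : ℝ → [0,1] be a C^∞ function with ξ(s) = 1 for 0 ≤ s ≤ 1, ξ(s) = 0 for s ≥ 2, and whose first four derivatives are bounded. For T > 0 and R > 1 define φ₃(x,t) = ζ(t/T)^ℓ ξ(|x|/R)^ℓ on D^c × [0,T]. Then there exists a constant C > 0, independent of T and R, such that ∫₀^T ∫_{D^c} φ₃(x,t)^{−1/(p−1)} |Δ²_x φ₃(x,t)|^{p'} dx dt ≤ C T R^{N − 4p'}, where the integrand is interpreted as 0 on the set where φ₃ vanishes (Δ²_x denotes the biharmonic operator acting on the x variable). -/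
open MeasureTheory Real Set

noncomputable section

/-- The exterior domain `D^c`, the complement of the closed unit ball. -/
def Dc (N : ℕ) : Set (E N) := {x | 1 < ‖x‖}

lemma norm_esingle {N : ℕ} (i : Fin N) : ‖(EuclideanSpace.single i (1:ℝ) : E N)‖ = 1 := by
  simp [EuclideanSpace.norm_single]

lemma fderiv_fderiv_apply {N : ℕ} {g : E N → ℝ} (hg : ContDiff ℝ 2 g) (x v w : E N) :
    fderiv ℝ (fun y => fderiv ℝ g y v) x w = iteratedFDeriv ℝ 2 g x ![w, v] := by
  have hd : DifferentiableAt ℝ (fderiv ℝ g) x :=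
    (hg.fderiv_right (m := 1) (by norm_num)).differentiable (by norm_num) x
  have h1 := fderiv_clm_apply (c := fderiv ℝ g) (u := fun _ => v) hd (differentiableAt_const v)
  rw [iteratedFDeriv_two_apply]
  simp only [h1, fderiv_fun_const, Pi.zero_apply, ContinuousLinearMap.comp_zero, zero_add]
  rfl

lemma contDiff_evderiv {N : ℕ} {f : E N → ℝ} {n : WithTop ℕ∞} {m : WithTop ℕ∞}
    (hf : ContDiff ℝ n f) (hmn : m + 1 ≤ n) (v : E N) :
    ContDiff ℝ m (fun y => fderiv ℝ f y v) :=
  (hf.fderiv_right hmn).clm_apply contDiff_const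

lemma contDiff_lapl {N : ℕ} {f : E N → ℝ} (hf : ContDiff ℝ 4 f) :
    ContDiff ℝ 2 (lapl f) := by
  have : ContDiff ℝ 2 (fun x => ∑ i : Fin N,
      fderiv ℝ (fun y => fderiv ℝ f y (EuclideanSpace.single i 1)) x
        (EuclideanSpace.single i 1)) := by
    apply ContDiff.sum
    intro i _
    exact contDiff_evderiv (m := 2) (contDiff_evderiv (m := 3) hf (by norm_num) _) (by norm_num) _
  exact this

lemma abs_lapl_le {N : ℕ} {g : E N → ℝ} (hg : ContDiff ℝ 2 g) (x : E N) :
    |lapl g x| ≤ (N : ℝ) * ‖iteratedFDeriv ℝ 2 g x‖ := by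
  have : |lapl g x| ≤ ∑ i : Fin N, ‖iteratedFDeriv ℝ 2 g x‖ := by
    refine (Finset.abs_sum_le_sum_abs _ _).trans (Finset.sum_le_sum fun i _ => ?_)
    rw [fderiv_fderiv_apply hg]
    calc |iteratedFDeriv ℝ 2 g x ![EuclideanSpace.single i 1, EuclideanSpace.single i 1]|
        ≤ ‖iteratedFDeriv ℝ 2 g x‖ * ∏ j : Fin 2,
            ‖(![EuclideanSpace.single i (1:ℝ), EuclideanSpace.single i 1] : Fin 2 → E N) j‖ :=
          (iteratedFDeriv ℝ 2 g x).le_opNorm _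
      _ ≤ ‖iteratedFDeriv ℝ 2 g x‖ := by
          rw [Fin.prod_univ_two]
          simp [norm_esingle]
  simpa [Finset.sum_const, Finset.card_univ, nsmul_eq_mul] using this

lemma norm_ev_le {N : ℕ} (i : Fin N) :
    ‖(ContinuousLinearMap.apply ℝ ℝ (EuclideanSpace.single i (1:ℝ)))‖ ≤ 1 := by
  refine ContinuousLinearMap.opNorm_le_bound _ zero_le_one fun L => ?_
  have : ‖L (EuclideanSpace.single i (1:ℝ))‖ ≤ ‖L‖ * ‖(EuclideanSpace.single i (1:ℝ) : E N)‖ :=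
    L.le_opNorm _
  simpa [norm_esingle, one_mul] using this

lemma abs_bilapl_le {N : ℕ} {f : E N → ℝ} (hf : ContDiff ℝ 4 f) (x : E N) :
    |bilapl f x| ≤ (N : ℝ) ^ 2 * ‖iteratedFDeriv ℝ 4 f x‖ := by
  have hfd : ContDiff ℝ 3 (fderiv ℝ f) := hf.fderiv_right (by norm_num)
  have hGc : ∀ i : Fin N, ContDiff ℝ 3 (fun y => fderiv ℝ f y (EuclideanSpace.single i 1)) :=
    fun i => hfd.clm_apply contDiff_const
  have hGd : ∀ i : Fin N, ContDiff ℝ 2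
      (fderiv ℝ (fun y => fderiv ℝ f y (EuclideanSpace.single i 1))) :=
    fun i => (hGc i).fderiv_right (by norm_num)
  have hgc : ∀ i : Fin N, ContDiff ℝ 2 (fun z =>
      fderiv ℝ (fun y => fderiv ℝ f y (EuclideanSpace.single i 1)) z (EuclideanSpace.single i 1)) :=
    fun i => (hGd i).clm_apply contDiff_const
  have hterm : ∀ i : Fin N, ‖iteratedFDeriv ℝ 2 (fun z =>
      fderiv ℝ (fun y => fderiv ℝ f y (EuclideanSpace.single i 1)) z
        (EuclideanSpace.single i 1)) x‖ ≤ ‖iteratedFDeriv ℝ 4 f x‖ := by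
    intro i
    have h1 : iteratedFDeriv ℝ 2 (fun z =>
        fderiv ℝ (fun y => fderiv ℝ f y (EuclideanSpace.single i 1)) z
          (EuclideanSpace.single i 1)) x
        = (ContinuousLinearMap.apply ℝ ℝ
            (EuclideanSpace.single i (1:ℝ))).compContinuousMultilinearMap
            (iteratedFDeriv ℝ 2
              (fderiv ℝ (fun y => fderiv ℝ f y (EuclideanSpace.single i 1))) x) := by
      have hco : (fun z => fderiv ℝ (fun y => fderiv ℝ f y (EuclideanSpace.single i 1)) z
            (EuclideanSpace.single i 1))
          = (⇑(ContinuousLinearMap.apply ℝ ℝ (EuclideanSpace.single i (1:ℝ)))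
              ∘ fderiv ℝ (fun y => fderiv ℝ f y (EuclideanSpace.single i 1))) := by
        funext z; simp
      rw [hco]
      exact ContinuousLinearMap.iteratedFDeriv_comp_left _ (hGd i).contDiffAt (by norm_num)
    have h2 : iteratedFDeriv ℝ 3 (fun y => fderiv ℝ f y (EuclideanSpace.single i 1)) x
        = (ContinuousLinearMap.apply ℝ ℝ
            (EuclideanSpace.single i (1:ℝ))).compContinuousMultilinearMap
            (iteratedFDeriv ℝ 3 (fderiv ℝ f) x) := by
      have hco : (fun y => fderiv ℝ f y (EuclideanSpace.single i 1))
          = (⇑(ContinuousLinearMap.apply ℝ ℝ (EuclideanSpace.single i (1:ℝ)))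
              ∘ fderiv ℝ f) := by
        funext z; simp
      rw [hco]
      exact ContinuousLinearMap.iteratedFDeriv_comp_left _ hfd.contDiffAt (by norm_num)
    calc ‖iteratedFDeriv ℝ 2 (fun z =>
        fderiv ℝ (fun y => fderiv ℝ f y (EuclideanSpace.single i 1)) z
          (EuclideanSpace.single i 1)) x‖
        ≤ ‖(ContinuousLinearMap.apply ℝ ℝ (EuclideanSpace.single i (1:ℝ)))‖ *
            ‖iteratedFDeriv ℝ 2
              (fderiv ℝ (fun y => fderiv ℝ f y (EuclideanSpace.single i 1))) x‖ := by
          rw [h1]; exact ContinuousLinearMap.norm_compContinuousMultilinearMap_le _ _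
      _ ≤ 1 * ‖iteratedFDeriv ℝ 3 (fun y => fderiv ℝ f y (EuclideanSpace.single i 1)) x‖ := by
          rw [norm_iteratedFDeriv_fderiv]
          exact mul_le_mul_of_nonneg_right (norm_ev_le i) (norm_nonneg _)
      _ ≤ ‖(ContinuousLinearMap.apply ℝ ℝ (EuclideanSpace.single i (1:ℝ)))‖ *
            ‖iteratedFDeriv ℝ 3 (fderiv ℝ f) x‖ := by
          rw [one_mul, h2]
          exact ContinuousLinearMap.norm_compContinuousMultilinearMap_le _ _
      _ ≤ 1 * ‖iteratedFDeriv ℝ 4 f x‖ := by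
          rw [norm_iteratedFDeriv_fderiv]
          exact mul_le_mul_of_nonneg_right (norm_ev_le i) (norm_nonneg _)
      _ = ‖iteratedFDeriv ℝ 4 f x‖ := one_mul _
  have key : ‖iteratedFDeriv ℝ 2 (lapl f) x‖ ≤ (N : ℝ) * ‖iteratedFDeriv ℝ 4 f x‖ := by
    have hsum := congrFun (iteratedFDeriv_sum (𝕜 := ℝ) (i := 2) (u := Finset.univ)
      (fun j (_ : j ∈ Finset.univ) => hgc j)) x
    rw [Finset.sum_apply] at hsum
    have heq : iteratedFDeriv ℝ 2 (lapl f) x = ∑ i : Fin N, iteratedFDeriv ℝ 2 (fun z =>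
        fderiv ℝ (fun y => fderiv ℝ f y (EuclideanSpace.single i 1)) z
          (EuclideanSpace.single i 1)) x := hsum
    rw [heq]
    calc ‖∑ i : Fin N, iteratedFDeriv ℝ 2 (fun z =>
        fderiv ℝ (fun y => fderiv ℝ f y (EuclideanSpace.single i 1)) z
          (EuclideanSpace.single i 1)) x‖
        ≤ ∑ i : Fin N, ‖iteratedFDeriv ℝ 2 (fun z =>
            fderiv ℝ (fun y => fderiv ℝ f y (EuclideanSpace.single i 1)) z
              (EuclideanSpace.single i 1)) x‖ := norm_sum_le _ _
      _ ≤ ∑ _i : Fin N, ‖iteratedFDeriv ℝ 4 f x‖ := Finset.sum_le_sum fun i _ => hterm i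
      _ = (N : ℝ) * ‖iteratedFDeriv ℝ 4 f x‖ := by
          simp [Finset.sum_const, Finset.card_univ, nsmul_eq_mul]
  calc |bilapl f x| ≤ (N : ℝ) * ‖iteratedFDeriv ℝ 2 (lapl f) x‖ := abs_lapl_le (contDiff_lapl hf) x
    _ ≤ (N : ℝ) * ((N : ℝ) * ‖iteratedFDeriv ℝ 4 f x‖) :=
        mul_le_mul_of_nonneg_left key (Nat.cast_nonneg N)
    _ = (N : ℝ) ^ 2 * ‖iteratedFDeriv ℝ 4 f x‖ := by ring

lemma lapl_const_mul {N : ℕ} {f : E N → ℝ} (hf : ContDiff ℝ 2 f) (c : ℝ) (x : E N) :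
    lapl (fun y => c * f y) x = c * lapl f x := by
  unfold lapl
  rw [Finset.mul_sum]
  refine Finset.sum_congr rfl fun i _ => ?_
  have hdf : ∀ y, DifferentiableAt ℝ f y := fun y =>
    (hf.differentiable (by norm_num)).differentiableAt
  have h1 : (fun y => fderiv ℝ (fun z => c * f z) y (EuclideanSpace.single i 1))
      = fun y => c * fderiv ℝ f y (EuclideanSpace.single i 1) := by
    funext y
    rw [fderiv_const_mul (hdf y)]
    simp
  rw [h1]
  have hd2 : DifferentiableAt ℝ (fun y => fderiv ℝ f y (EuclideanSpace.single i 1)) x :=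
    ((contDiff_evderiv (m := 1) hf (by norm_num) _).differentiable (by norm_num)).differentiableAt
  rw [fderiv_const_mul hd2]
  simp

lemma bilapl_const_mul {N : ℕ} {f : E N → ℝ} (hf : ContDiff ℝ 4 f) (c : ℝ) (x : E N) :
    bilapl (fun y => c * f y) x = c * bilapl f x := by
  have h1 : lapl (fun y => c * f y) = fun y => c * lapl f y :=
    funext fun y => lapl_const_mul (hf.of_le (by norm_num)) c y
  unfold bilapl
  rw [h1]
  exact lapl_const_mul (contDiff_lapl hf) c x

lemma iteratedDeriv_rpow (ℓ : ℝ) : ∀ k : ℕ, (k : ℝ) ≤ ℓ →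
    iteratedDeriv k (fun x : ℝ => x ^ ℓ)
      = fun x : ℝ => (∏ i ∈ Finset.range k, (ℓ - i)) * x ^ (ℓ - k) := by
  intro k
  induction k with
  | zero => intro _; funext x; simp
  | succ k ih =>
    intro hk
    have hk' : (k : ℝ) ≤ ℓ := le_trans (by exact_mod_cast Nat.le_succ k) hk
    have h1 : 1 ≤ ℓ - k := by
      have : ((k+1 : ℕ) : ℝ) = (k : ℝ) + 1 := by push_cast; ring
      linarith [hk, this ▸ hk]
    rw [iteratedDeriv_succ, ih hk']
    funext x
    have hderiv := ((Real.hasDerivAt_rpow_const (x := x) (p := ℓ - k) (Or.inr h1)).const_mul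
      (∏ i ∈ Finset.range k, (ℓ - i))).deriv
    rw [hderiv, Finset.prod_range_succ]
    have : ℓ - ↑(k+1) = ℓ - ↑k - 1 := by push_cast; ring
    rw [this, mul_assoc]

lemma norm_iFD_rpow_le {ℓ : ℝ} (hl : (4:ℝ) < ℓ) {z : ℝ} (hz0 : 0 ≤ z) (hz1 : z ≤ 1)
    {k : ℕ} (hk : k ≤ 4) :
    ‖iteratedFDeriv ℝ k (fun x : ℝ => x ^ ℓ) z‖ ≤ ℓ ^ 4 * z ^ (ℓ - 4) := by
  have hk' : (k : ℝ) ≤ 4 := by exact_mod_cast hk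
  rw [norm_iteratedFDeriv_eq_norm_iteratedDeriv,
    iteratedDeriv_rpow ℓ k (le_trans hk' hl.le)]
  show ‖(∏ i ∈ Finset.range k, (ℓ - (i:ℝ))) * z ^ (ℓ - (k:ℝ))‖ ≤ ℓ ^ 4 * z ^ (ℓ - 4)
  have hzk : (0:ℝ) ≤ z ^ (ℓ - (k:ℝ)) := Real.rpow_nonneg hz0 _
  have hC : |∏ i ∈ Finset.range k, (ℓ - (i:ℝ))| ≤ ℓ ^ 4 := by
    rw [Finset.abs_prod]
    have h1 : ∏ i ∈ Finset.range k, |ℓ - (i:ℝ)| ≤ ∏ _i ∈ Finset.range k, ℓ := by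
      refine Finset.prod_le_prod (fun i _ => abs_nonneg _) fun i hi => ?_
      have hik : i < k := Finset.mem_range.mp hi
      have hi3 : i ≤ 3 := by omega
      have hi3' : (i:ℝ) ≤ 3 := by exact_mod_cast hi3
      have hi0 : (0:ℝ) ≤ (i:ℝ) := Nat.cast_nonneg i
      exact abs_le.mpr ⟨by linarith, by linarith⟩
    have h2 : ∏ _i ∈ Finset.range k, ℓ = ℓ ^ k := by
      rw [Finset.prod_const, Finset.card_range]
    have h3 : ℓ ^ k ≤ ℓ ^ 4 := pow_le_pow_right₀ (by linarith) hk
    linarith [h1, h2 ▸ h1]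
  have hzz : z ^ (ℓ - (k:ℝ)) ≤ z ^ (ℓ - 4) := by
    rcases eq_or_lt_of_le hz0 with h | h
    · rw [← h, Real.zero_rpow (by linarith), Real.zero_rpow (by linarith)]
    · exact Real.rpow_le_rpow_of_exponent_ge h hz1 (by linarith)
  calc ‖(∏ i ∈ Finset.range k, (ℓ - (i:ℝ))) * z ^ (ℓ - (k:ℝ))‖
      = |∏ i ∈ Finset.range k, (ℓ - (i:ℝ))| * (z ^ (ℓ - (k:ℝ))) := by
        rw [norm_mul, Real.norm_eq_abs, Real.norm_eq_abs, abs_of_nonneg hzk]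
    _ ≤ ℓ ^ 4 * z ^ (ℓ - 4) := mul_le_mul hC hzz hzk (by positivity)

lemma contDiff_xi_norm {N : ℕ} {ξ : ℝ → ℝ} (hs : ContDiff ℝ (⊤ : ℕ∞) ξ)
    (hone : ∀ s : ℝ, 0 ≤ s → s ≤ 1 → ξ s = 1) {n : ℕ∞} :
    ContDiff ℝ n (fun z : E N => ξ ‖z‖) := by
  rw [contDiff_iff_contDiffAt]
  intro z
  by_cases hz : ‖z‖ < 1
  · refine (contDiffAt_const (c := (1:ℝ))).congr_of_eventuallyEq ?_
    refine Filter.eventuallyEq_of_mem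
      (Metric.isOpen_ball.mem_nhds (x := z) (s := Metric.ball (0 : E N) 1)
        (by simpa [Metric.mem_ball, dist_zero_right] using hz)) fun y hy => ?_
    have : ‖y‖ < 1 := by simpa [Metric.mem_ball, dist_zero_right] using hy
    exact hone ‖y‖ (norm_nonneg y) this.le
  · have hz0 : z ≠ 0 := by
      intro h
      rw [h, norm_zero] at hz
      exact hz one_pos
    have h1 : ContDiffAt ℝ n ξ ‖z‖ := hs.contDiffAt.of_le (by exact_mod_cast le_top)
    exact h1.comp z (contDiffAt_norm ℝ hz0)

lemma iFD_eq_zero_of_far {N : ℕ} {ξ : ℝ → ℝ} (hzero : ∀ s : ℝ, 2 ≤ s → ξ s = 0)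
    {z : E N} (hz : 3 < ‖z‖) (i : ℕ) (hi : i ≠ 0) :
    iteratedFDeriv ℝ i (fun y : E N => ξ ‖y‖) z = 0 := by
  have hev : (fun y : E N => ξ ‖y‖) =ᶠ[nhds z] (fun _ => (0:ℝ)) := by
    refine Filter.eventuallyEq_of_mem (Metric.isOpen_ball.mem_nhds
      (x := z) (s := Metric.ball z 1) (by simp)) fun y hy => ?_
    have hdist : ‖y - z‖ < 1 := by
      simpa [Metric.mem_ball, dist_eq_norm] using hy
    have : 2 ≤ ‖y‖ := by
      have := norm_sub_norm_le z y
      have h2 : ‖z - y‖ = ‖y - z‖ := norm_sub_rev z y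
      linarith
    exact hzero ‖y‖ this
  have heq : iteratedFDeriv ℝ i (fun y : E N => ξ ‖y‖) z
      = iteratedFDeriv ℝ i (fun _ : E N => (0:ℝ)) z := by
    rw [← iteratedFDerivWithin_univ, ← iteratedFDerivWithin_univ]
    refine Filter.EventuallyEq.iteratedFDerivWithin_eq ?_ ?_ i
    · rw [nhdsWithin_univ]; exact hev
    · exact hzero ‖z‖ (by linarith)
  rw [heq, iteratedFDeriv_const_of_ne hi]
  rfl

lemma xi_norm_deriv_bounds {N : ℕ} {ξ : ℝ → ℝ} (hs : ContDiff ℝ (⊤ : ℕ∞) ξ)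
    (hone : ∀ s : ℝ, 0 ≤ s → s ≤ 1 → ξ s = 1) (hzero : ∀ s : ℝ, 2 ≤ s → ξ s = 0) :
    ∃ D : ℝ, 1 ≤ D ∧ ∀ (z : E N) (i : ℕ), 1 ≤ i → i ≤ 4 →
      ‖iteratedFDeriv ℝ i (fun y : E N => ξ ‖y‖) z‖ ≤ D ^ i := by
  have hcd : ContDiff ℝ (⊤ : ℕ∞) (fun z : E N => ξ ‖z‖) := contDiff_xi_norm hs hone
  have hh : ∀ i : ℕ, Continuous (iteratedFDeriv ℝ i (fun y : E N => ξ ‖y‖)) := fun i =>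
    hcd.continuous_iteratedFDeriv (by exact_mod_cast le_top)
  have hbd : ∀ i : ℕ, ∃ C : ℝ, ∀ z ∈ Metric.closedBall (0 : E N) 3,
      ‖iteratedFDeriv ℝ i (fun y : E N => ξ ‖y‖) z‖ ≤ C := fun i =>
    (isCompact_closedBall (0 : E N) 3).exists_bound_of_continuousOn (hh i).continuousOn
  obtain ⟨C1, h1⟩ := hbd 1
  obtain ⟨C2, h2⟩ := hbd 2
  obtain ⟨C3, h3⟩ := hbd 3
  obtain ⟨C4, h4⟩ := hbd 4
  refine ⟨max 1 (max C1 (max C2 (max C3 C4))), le_max_left _ _, fun z i hi1 hi4 => ?_⟩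
  set D := max 1 (max C1 (max C2 (max C3 C4))) with hD
  have hD1 : (1:ℝ) ≤ D := le_max_left _ _
  have hDi : D ≤ D ^ i := le_self_pow₀ (by linarith) (by omega)
  by_cases hz : z ∈ Metric.closedBall (0 : E N) 3
  · have hCle : ∀ C ∈ ({C1, C2, C3, C4} : Set ℝ), C ≤ D := by
      intro C hC
      rcases hC with h | h | h | h
      · rw [h, hD]; exact le_max_of_le_right (le_max_left _ _)
      · rw [h, hD]; exact le_max_of_le_right (le_max_of_le_right (le_max_left _ _))
      · rw [h, hD]
        exact le_max_of_le_right (le_max_of_le_right (le_max_of_le_right (le_max_left _ _)))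
      · rw [h, hD]
        exact le_max_of_le_right (le_max_of_le_right (le_max_of_le_right (le_max_right _ _)))
    interval_cases i
    · exact le_trans (h1 z hz) (le_trans (hCle C1 (by simp)) hDi)
    · exact le_trans (h2 z hz) (le_trans (hCle C2 (by simp)) hDi)
    · exact le_trans (h3 z hz) (le_trans (hCle C3 (by simp)) hDi)
    · exact le_trans (h4 z hz) (le_trans (hCle C4 (by simp)) hDi)
  · have hz3 : 3 < ‖z‖ := by
      simpa [Metric.mem_closedBall, dist_zero_right, not_le] using hz
    rw [iFD_eq_zero_of_far hzero hz3 i (by omega)]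
    simp only [norm_zero]
    positivity

lemma Phi1_contDiff {N : ℕ} {ξ : ℝ → ℝ} (hs : ContDiff ℝ (⊤ : ℕ∞) ξ)
    (hone : ∀ s : ℝ, 0 ≤ s → s ≤ 1 → ξ s = 1) {ℓ : ℝ} (hl : (4:ℝ) < ℓ) :
    ContDiff ℝ 4 (fun z : E N => (ξ ‖z‖) ^ ℓ) := by
  have h1 : ContDiff ℝ 4 (fun x : ℝ => x ^ ℓ) :=
    Real.contDiff_rpow_const_of_le (by exact_mod_cast hl.le)
  have h2 : ContDiff ℝ ((4:ℕ∞) : WithTop ℕ∞) (fun z : E N => ξ ‖z‖) := contDiff_xi_norm hs hone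
  exact h1.comp (by exact_mod_cast h2)

lemma norm_iFD4_Phi1_le {N : ℕ} {ξ : ℝ → ℝ} (hs : ContDiff ℝ (⊤ : ℕ∞) ξ)
    (hrange : ∀ s, ξ s ∈ Icc (0:ℝ) 1)
    (hone : ∀ s : ℝ, 0 ≤ s → s ≤ 1 → ξ s = 1) (hzero : ∀ s : ℝ, 2 ≤ s → ξ s = 0)
    {ℓ : ℝ} (hl : (4:ℝ) < ℓ) :
    ∃ C : ℝ, 0 ≤ C ∧ ∀ z : E N,
      ‖iteratedFDeriv ℝ 4 (fun y : E N => (ξ ‖y‖) ^ ℓ) z‖ ≤ C * (ξ ‖z‖) ^ (ℓ - 4) := by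
  obtain ⟨D, hD1, hD⟩ := xi_norm_deriv_bounds (N := N) hs hone hzero
  refine ⟨24 * ℓ ^ 4 * D ^ 4, by positivity, fun z => ?_⟩
  have hg : ContDiff ℝ 4 (fun x : ℝ => x ^ ℓ) :=
    Real.contDiff_rpow_const_of_le (by exact_mod_cast hl.le)
  have hf : ContDiff ℝ 4 (fun y : E N => ξ ‖y‖) := by
    have := contDiff_xi_norm (N := N) hs hone (n := 4)
    exact_mod_cast this
  have hcomp := norm_iteratedFDeriv_comp_le (𝕜 := ℝ) (g := fun x : ℝ => x ^ ℓ)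
    (f := fun y : E N => ξ ‖y‖) (n := 4) (N := 4) hg hf le_rfl z
    (C := ℓ ^ 4 * (ξ ‖z‖) ^ (ℓ - 4)) (D := D)
    (fun i hi => norm_iFD_rpow_le hl (hrange ‖z‖).1 (hrange ‖z‖).2 hi)
    (fun i hi1 hi4 => hD z i hi1 hi4)
  have heq : ((fun x : ℝ => x ^ ℓ) ∘ (fun y : E N => ξ ‖y‖))
      = fun y : E N => (ξ ‖y‖) ^ ℓ := rfl
  rw [heq] at hcomp
  calc ‖iteratedFDeriv ℝ 4 (fun y : E N => (ξ ‖y‖) ^ ℓ) z‖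
      ≤ (Nat.factorial 4 : ℝ) * (ℓ ^ 4 * (ξ ‖z‖) ^ (ℓ - 4)) * D ^ 4 := hcomp
    _ = 24 * ℓ ^ 4 * D ^ 4 * (ξ ‖z‖) ^ (ℓ - 4) := by
        have : (Nat.factorial 4 : ℝ) = 24 := by norm_num [Nat.factorial]
        rw [this]; ring

lemma PhiR_eq_comp {N : ℕ} (ξ : ℝ → ℝ) (ℓ : ℝ) {R : ℝ} (hR : 0 < R) :
    (fun y : E N => (ξ (‖y‖ / R)) ^ ℓ)
      = (fun z : E N => (ξ ‖z‖) ^ ℓ) ∘ ⇑(R⁻¹ • ContinuousLinearMap.id ℝ (E N)) := by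
  funext y
  simp only [Function.comp_apply, ContinuousLinearMap.smul_apply, ContinuousLinearMap.id_apply,
    norm_smul, Real.norm_eq_abs, abs_of_pos (inv_pos.mpr hR)]
  rw [div_eq_inv_mul]

lemma PhiR_contDiff {N : ℕ} {ξ : ℝ → ℝ} (hs : ContDiff ℝ (⊤ : ℕ∞) ξ)
    (hone : ∀ s : ℝ, 0 ≤ s → s ≤ 1 → ξ s = 1) {ℓ : ℝ} (hl : (4:ℝ) < ℓ)
    {R : ℝ} (hR : 0 < R) :
    ContDiff ℝ 4 (fun y : E N => (ξ (‖y‖ / R)) ^ ℓ) := by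
  rw [PhiR_eq_comp ξ ℓ hR]
  exact (Phi1_contDiff hs hone hl).comp (R⁻¹ • ContinuousLinearMap.id ℝ (E N)).contDiff

lemma norm_iFD4_PhiR_le {N : ℕ} {ξ : ℝ → ℝ} (hs : ContDiff ℝ (⊤ : ℕ∞) ξ)
    (hrange : ∀ s, ξ s ∈ Icc (0:ℝ) 1)
    (hone : ∀ s : ℝ, 0 ≤ s → s ≤ 1 → ξ s = 1) (hzero : ∀ s : ℝ, 2 ≤ s → ξ s = 0)
    {ℓ : ℝ} (hl : (4:ℝ) < ℓ) :
    ∃ C : ℝ, 0 ≤ C ∧ ∀ (R : ℝ), 0 < R → ∀ x : E N,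
      ‖iteratedFDeriv ℝ 4 (fun y : E N => (ξ (‖y‖ / R)) ^ ℓ) x‖
        ≤ C * (ξ (‖x‖ / R)) ^ (ℓ - 4) * (R⁻¹) ^ (4:ℕ) := by
  obtain ⟨C, hC0, hC⟩ := norm_iFD4_Phi1_le (N := N) hs hrange hone hzero hl
  refine ⟨C, hC0, fun R hR x => ?_⟩
  set σ : E N →L[ℝ] E N := R⁻¹ • ContinuousLinearMap.id ℝ (E N) with hσ
  have hσn : ‖σ‖ ≤ R⁻¹ := by
    rw [hσ]
    calc ‖R⁻¹ • ContinuousLinearMap.id ℝ (E N)‖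
        ≤ ‖R⁻¹‖ * ‖ContinuousLinearMap.id ℝ (E N)‖ := ContinuousLinearMap.opNorm_smul_le _ _
      _ ≤ R⁻¹ * 1 := by
          rw [Real.norm_eq_abs, abs_of_pos (inv_pos.mpr hR)]
          exact mul_le_mul_of_nonneg_left ContinuousLinearMap.norm_id_le
            (le_of_lt (inv_pos.mpr hR))
      _ = R⁻¹ := mul_one _
  have hiFD : iteratedFDeriv ℝ 4 (fun y : E N => (ξ (‖y‖ / R)) ^ ℓ) x
      = (iteratedFDeriv ℝ 4 (fun z : E N => (ξ ‖z‖) ^ ℓ) (σ x)).compContinuousLinearMap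
          (fun _ => σ) := by
    rw [PhiR_eq_comp ξ ℓ hR]
    exact ContinuousLinearMap.iteratedFDeriv_comp_right σ (Phi1_contDiff hs hone hl) x
      (by norm_num)
  have hnσx : ‖σ x‖ = ‖x‖ / R := by
    rw [hσ]
    simp only [ContinuousLinearMap.smul_apply, ContinuousLinearMap.id_apply, norm_smul,
      Real.norm_eq_abs, abs_of_pos (inv_pos.mpr hR)]
    rw [div_eq_inv_mul]
  calc ‖iteratedFDeriv ℝ 4 (fun y : E N => (ξ (‖y‖ / R)) ^ ℓ) x‖
      ≤ ‖iteratedFDeriv ℝ 4 (fun z : E N => (ξ ‖z‖) ^ ℓ) (σ x)‖ * ∏ _i : Fin 4, ‖σ‖ := by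
        rw [hiFD]
        exact ContinuousMultilinearMap.norm_compContinuousLinearMap_le _ _
    _ ≤ (C * (ξ ‖σ x‖) ^ (ℓ - 4)) * (R⁻¹) ^ (4:ℕ) := by
        refine mul_le_mul (hC (σ x)) ?_ ?_ ?_
        · rw [Finset.prod_const, Finset.card_univ, Fintype.card_fin]
          exact pow_le_pow_left₀ (norm_nonneg σ) hσn 4
        · exact Finset.prod_nonneg fun _ _ => norm_nonneg σ
        · exact mul_nonneg hC0 (Real.rpow_nonneg (hrange _).1 _)
    _ = C * (ξ (‖x‖ / R)) ^ (ℓ - 4) * (R⁻¹) ^ (4:ℕ) := by rw [hnσx]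

lemma pointwise_bound {N : ℕ} {ξ : ℝ → ℝ} {p ℓ : ℝ} (hp : 1 < p)
    (hℓ : 4 * (p / (p - 1)) ≤ ℓ)
    (hξ_smooth : ContDiff ℝ (⊤ : ℕ∞) ξ)
    (hξ_range : ∀ s, ξ s ∈ Icc (0 : ℝ) 1)
    (hξ_one : ∀ s : ℝ, 0 ≤ s → s ≤ 1 → ξ s = 1)
    {C : ℝ} (hC0 : 0 ≤ C)
    (hC : ∀ (R : ℝ), 0 < R → ∀ x : E N,
      ‖iteratedFDeriv ℝ 4 (fun y : E N => (ξ (‖y‖ / R)) ^ ℓ) x‖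
        ≤ C * (ξ (‖x‖ / R)) ^ (ℓ - 4) * (R⁻¹) ^ (4:ℕ))
    {R : ℝ} (hR : 1 < R) (a : ℝ) (ha : a ∈ Icc (0:ℝ) 1) (x : E N)
    (hne : a ^ ℓ * ξ (‖x‖ / R) ^ ℓ ≠ 0) :
    (a ^ ℓ * ξ (‖x‖ / R) ^ ℓ) ^ (-(1 / (p - 1)))
      * |bilapl (fun y : E N => a ^ ℓ * ξ (‖y‖ / R) ^ ℓ) x| ^ (p / (p - 1))
      ≤ ((N:ℝ) ^ 2 * C + 1) ^ (p / (p - 1)) * R ^ (-(4 * (p / (p - 1)))) := by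
  have hp1 : 0 < p - 1 := by linarith
  have hq1 : 1 < p / (p - 1) := (one_lt_div hp1).mpr (by linarith)
  have hl4 : (4:ℝ) < ℓ := by nlinarith
  have hR0 : 0 < R := by linarith
  set q := p / (p - 1) with hqdef
  set c := 1 / (p - 1) with hcdef
  have hqc : -c + q = 1 := by rw [hcdef, hqdef]; field_simp; ring
  have hq0 : 0 ≤ q := by linarith
  set b := ξ (‖x‖ / R) with hb
  have hb01 := hξ_range (‖x‖ / R)
  have ha0 : 0 ≤ a := ha.1
  have hb0 : 0 ≤ b := hb01.1
  have hane : a ≠ 0 := by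
    rintro rfl
    exact hne (by rw [Real.zero_rpow (by linarith), zero_mul])
  have hbne : b ≠ 0 := by
    rintro h
    exact hne (by rw [h, Real.zero_rpow (by linarith), mul_zero])
  have hapos : 0 < a := lt_of_le_of_ne ha0 (Ne.symm hane)
  have hbpos : 0 < b := lt_of_le_of_ne hb0 (Ne.symm hbne)
  have hA : 0 < a ^ ℓ := Real.rpow_pos_of_pos hapos ℓ
  have hB : 0 < b ^ ℓ := Real.rpow_pos_of_pos hbpos ℓ
  set K := (N:ℝ) ^ 2 * C + 1 with hK
  have hK0 : 0 < K := by positivity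
  have hPhiR : ContDiff ℝ 4 (fun y : E N => (ξ (‖y‖ / R)) ^ ℓ) :=
    PhiR_contDiff hξ_smooth hξ_one hl4 hR0
  have h1 : bilapl (fun y : E N => a ^ ℓ * ξ (‖y‖ / R) ^ ℓ) x
      = a ^ ℓ * bilapl (fun y : E N => ξ (‖y‖ / R) ^ ℓ) x := bilapl_const_mul hPhiR _ x
  have hw0 : 0 ≤ b ^ (ℓ - 4) * (R⁻¹) ^ (4:ℕ) := by
    apply mul_nonneg (Real.rpow_nonneg hb0 _)
    positivity
  have h2 : |bilapl (fun y : E N => ξ (‖y‖ / R) ^ ℓ) x| ≤ K * (b ^ (ℓ - 4) * (R⁻¹) ^ (4:ℕ)) := by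
    calc |bilapl (fun y : E N => ξ (‖y‖ / R) ^ ℓ) x|
        ≤ (N:ℝ) ^ 2 * ‖iteratedFDeriv ℝ 4 (fun y : E N => (ξ (‖y‖ / R)) ^ ℓ) x‖ :=
          abs_bilapl_le hPhiR x
      _ ≤ (N:ℝ) ^ 2 * (C * b ^ (ℓ - 4) * (R⁻¹) ^ (4:ℕ)) :=
          mul_le_mul_of_nonneg_left (hC R hR0 x) (by positivity)
      _ = ((N:ℝ) ^ 2 * C) * (b ^ (ℓ - 4) * (R⁻¹) ^ (4:ℕ)) := by ring
      _ ≤ K * (b ^ (ℓ - 4) * (R⁻¹) ^ (4:ℕ)) :=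
          mul_le_mul_of_nonneg_right (by rw [hK]; linarith) hw0
  have h4 : |bilapl (fun y : E N => a ^ ℓ * ξ (‖y‖ / R) ^ ℓ) x|
      ≤ a ^ ℓ * (K * (b ^ (ℓ - 4) * (R⁻¹) ^ (4:ℕ))) := by
    rw [h1, abs_mul, abs_of_pos hA]
    exact mul_le_mul_of_nonneg_left h2 hA.le
  have hstep1 : (a ^ ℓ * b ^ ℓ) ^ (-c)
      * |bilapl (fun y : E N => a ^ ℓ * ξ (‖y‖ / R) ^ ℓ) x| ^ q
      ≤ (a ^ ℓ * b ^ ℓ) ^ (-c) * (a ^ ℓ * (K * (b ^ (ℓ - 4) * (R⁻¹) ^ (4:ℕ)))) ^ q := by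
    refine mul_le_mul_of_nonneg_left ?_ (Real.rpow_nonneg (by positivity) _)
    exact Real.rpow_le_rpow (abs_nonneg _) h4 hq0
  refine le_trans hstep1 ?_
  -- expand everything
  have hexp1 : (a ^ ℓ * b ^ ℓ) ^ (-c) = (a ^ ℓ) ^ (-c) * (b ^ ℓ) ^ (-c) :=
    Real.mul_rpow hA.le hB.le
  have hexp2 : (a ^ ℓ * (K * (b ^ (ℓ - 4) * (R⁻¹) ^ (4:ℕ)))) ^ q
      = (a ^ ℓ) ^ q * (K ^ q * ((b ^ (ℓ - 4)) ^ q * ((R⁻¹) ^ (4:ℕ)) ^ q)) := by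
    rw [Real.mul_rpow hA.le (by positivity), Real.mul_rpow hK0.le hw0,
      Real.mul_rpow (Real.rpow_nonneg hb0 _) (by positivity)]
  rw [hexp1, hexp2]
  have hAterm : (a ^ ℓ) ^ (-c) * (a ^ ℓ) ^ q ≤ 1 := by
    rw [← Real.rpow_add hA (-c) q, hqc, Real.rpow_one]
    exact Real.rpow_le_one ha0 ha.2 (by linarith)
  have hBterm : (b ^ ℓ) ^ (-c) * (b ^ (ℓ - 4)) ^ q ≤ 1 := by
    rw [← Real.rpow_mul hb0 ℓ (-c), ← Real.rpow_mul hb0 (ℓ - 4) q,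
      ← Real.rpow_add hbpos]
    have e3 : ℓ * (-c) + (ℓ - 4) * q = ℓ - 4 * q := by
      have h' : ℓ * (-c) + (ℓ - 4) * q = ℓ * (-c + q) - 4 * q := by ring
      rw [h', hqc]; ring
    rw [e3]
    exact Real.rpow_le_one hb0 hb01.2 (by linarith)
  have hRterm : (((R⁻¹) ^ (4:ℕ) : ℝ)) ^ q = R ^ (-(4 * q)) := by
    have hr1 : ((R⁻¹) ^ (4:ℕ) : ℝ) = (R⁻¹) ^ ((4:ℝ)) := by
      rw [← Real.rpow_natCast R⁻¹ 4]; norm_num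
    rw [hr1, ← Real.rpow_mul (inv_nonneg.mpr hR0.le), Real.inv_rpow hR0.le,
      ← Real.rpow_neg hR0.le]
  have hfact0 : (0:ℝ) ≤ K ^ q * ((R⁻¹) ^ (4:ℕ)) ^ q := by
    apply mul_nonneg (Real.rpow_nonneg hK0.le _) (Real.rpow_nonneg (by positivity) _)
  have hb2 : (0:ℝ) ≤ (b ^ ℓ) ^ (-c) * (b ^ (ℓ - 4)) ^ q :=
    mul_nonneg (Real.rpow_nonneg (Real.rpow_nonneg hb0 _) _)
      (Real.rpow_nonneg (Real.rpow_nonneg hb0 _) _)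
  calc (a ^ ℓ) ^ (-c) * (b ^ ℓ) ^ (-c)
        * ((a ^ ℓ) ^ q * (K ^ q * ((b ^ (ℓ - 4)) ^ q * ((R⁻¹) ^ (4:ℕ)) ^ q)))
      = ((a ^ ℓ) ^ (-c) * (a ^ ℓ) ^ q)
          * (((b ^ ℓ) ^ (-c) * (b ^ (ℓ - 4)) ^ q) * (K ^ q * ((R⁻¹) ^ (4:ℕ)) ^ q)) := by
        ring
    _ ≤ 1 * (1 * (K ^ q * ((R⁻¹) ^ (4:ℕ)) ^ q)) := by
        refine mul_le_mul hAterm ?_ (mul_nonneg hb2 hfact0) zero_le_one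
        exact mul_le_mul hBterm le_rfl hfact0 zero_le_one
    _ = K ^ q * R ^ (-(4 * q)) := by rw [one_mul, one_mul, hRterm]

/-- with `φ₃(x,t) = ζ(t/T)^ℓ ξ(|x|/R)^ℓ`, the integral
`∫_Q φ₃^{−1/(p−1)} |Δ²_x φ₃|^{p'} dx dt` is bounded by `C T R^{N−4p'}`, where the
integrand is interpreted as `0` where `φ₃` vanishes. -/
theorem test_function_bilaplacian_integral_estimate
    (N : ℕ) (hN : 2 ≤ N) (p : ℝ) (hp : 1 < p) (ℓ : ℝ) (hℓ : 4 * (p / (p - 1)) ≤ ℓ)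
    (ζ : ℝ → ℝ)
    (hζ_smooth : ContDiff ℝ (⊤ : ℕ∞) ζ)
    (hζ_range : ∀ s, ζ s ∈ Icc (0 : ℝ) 1)
    (hζ_one : ∀ s : ℝ, 0 ≤ s → s ≤ 1 / 2 → ζ s = 1)
    (hζ_zero : ∀ s : ℝ, 1 ≤ s → ζ s = 0)
    (ξ : ℝ → ℝ)
    (hξ_smooth : ContDiff ℝ (⊤ : ℕ∞) ξ)
    (hξ_range : ∀ s, ξ s ∈ Icc (0 : ℝ) 1)
    (hξ_one : ∀ s : ℝ, 0 ≤ s → s ≤ 1 → ξ s = 1)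
    (hξ_zero : ∀ s : ℝ, 2 ≤ s → ξ s = 0)
    (hξ_bdd : ∀ k : ℕ, 1 ≤ k → k ≤ 4 → ∃ C : ℝ, ∀ s, |iteratedDeriv k ξ s| ≤ C) :
    ∃ C > (0 : ℝ), ∀ T : ℝ, 0 < T → ∀ R : ℝ, 1 < R →
      (∫ q in (Dc N) ×ˢ Icc (0 : ℝ) T,
          if ζ (q.2 / T) ^ ℓ * ξ (‖q.1‖ / R) ^ ℓ = 0 then 0
          else (ζ (q.2 / T) ^ ℓ * ξ (‖q.1‖ / R) ^ ℓ) ^ (-(1 / (p - 1)))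
            * |bilapl (fun y : E N => ζ (q.2 / T) ^ ℓ * ξ (‖y‖ / R) ^ ℓ) q.1| ^ (p / (p - 1)))
        ≤ C * T * R ^ ((N : ℝ) - 4 * (p / (p - 1))) := by
  have hp1 : 0 < p - 1 := by linarith
  have hq1 : 1 < p / (p - 1) := (one_lt_div hp1).mpr (by linarith)
  have hl4 : (4:ℝ) < ℓ := by nlinarith
  obtain ⟨C, hC0, hC⟩ := norm_iFD4_PhiR_le (N := N) hξ_smooth hξ_range hξ_one hξ_zero hl4
  set K := (N:ℝ) ^ 2 * C + 1 with hKdef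
  have hK0 : 0 < K := by positivity
  set q := p / (p - 1) with hqdef
  set vb := (volume (Metric.ball (0 : E N) 1)).toReal with hvbdef
  have hvb0 : 0 ≤ vb := ENNReal.toReal_nonneg
  refine ⟨K ^ q * 2 ^ N * vb + 1, by positivity, fun T hT R hR => ?_⟩
  have hR0 : 0 < R := by linarith
  set M := K ^ q * R ^ (-(4 * q)) with hMdef
  have hM0 : 0 ≤ M :=
    mul_nonneg (Real.rpow_nonneg hK0.le _) (Real.rpow_nonneg hR0.le _)
  set A : Set (E N × ℝ) := Metric.closedBall (0 : E N) (2*R) ×ˢ Icc (0:ℝ) T with hAdef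
  have hAmeas : MeasurableSet A := measurableSet_closedBall.prod measurableSet_Icc
  have hSmeas : MeasurableSet ((Dc N) ×ˢ Icc (0:ℝ) T) := by
    refine MeasurableSet.prod ?_ measurableSet_Icc
    exact (isOpen_lt continuous_const continuous_norm).measurableSet
  -- volume facts
  have hvolA : volume A = ENNReal.ofReal ((2*R) ^ N) * volume (Metric.ball (0 : E N) 1)
      * ENNReal.ofReal T := by
    have hsplit : volume (Metric.closedBall (0 : E N) (2*R) ×ˢ Icc (0:ℝ) T)
        = volume (Metric.closedBall (0 : E N) (2*R)) * volume (Icc (0:ℝ) T) := by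
      rw [Measure.volume_eq_prod, Measure.prod_prod]
    rw [hAdef, hsplit, Real.volume_Icc, sub_zero,
      Measure.addHaar_closedBall _ _ (by positivity : (0:ℝ) ≤ 2*R)]
    rw [finrank_euclideanSpace_fin]
  have hvolA_lt : volume A < ⊤ := by
    rw [hvolA]
    exact ENNReal.mul_lt_top (ENNReal.mul_lt_top ENNReal.ofReal_lt_top
      measure_ball_lt_top) ENNReal.ofReal_lt_top
  -- pointwise bound
  have hae : ∀ z ∈ (Dc N) ×ˢ Icc (0:ℝ) T,
      (if ζ (z.2 / T) ^ ℓ * ξ (‖z.1‖ / R) ^ ℓ = 0 then 0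
        else (ζ (z.2 / T) ^ ℓ * ξ (‖z.1‖ / R) ^ ℓ) ^ (-(1 / (p - 1)))
          * |bilapl (fun y : E N => ζ (z.2 / T) ^ ℓ * ξ (‖y‖ / R) ^ ℓ) z.1| ^ (p / (p - 1)))
      ≤ A.indicator (fun _ => M) z := by
    intro z hz
    by_cases hzero : ζ (z.2 / T) ^ ℓ * ξ (‖z.1‖ / R) ^ ℓ = 0
    · rw [if_pos hzero]
      exact Set.indicator_nonneg (fun _ _ => hM0) z
    · rw [if_neg hzero]
      have hxin : ‖z.1‖ ≤ 2 * R := by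
        by_contra hcon
        push_neg at hcon
        have h2 : (2:ℝ) ≤ ‖z.1‖ / R := (le_div_iff₀ hR0).mpr (by linarith)
        exact hzero (by rw [hξ_zero _ h2, Real.zero_rpow (by linarith), mul_zero])
      have hin : z ∈ A := by
        refine Set.mem_prod.mpr ⟨?_, hz.2⟩
        rw [Metric.mem_closedBall, dist_zero_right]
        exact hxin
      rw [Set.indicator_of_mem hin]
      exact pointwise_bound hp hℓ hξ_smooth hξ_range hξ_one hC0 hC hR
        (ζ (z.2 / T)) (hζ_range _) z.1 hzero
  -- integral comparison
  have hf0 : ∀ z : E N × ℝ, 0 ≤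
      (if ζ (z.2 / T) ^ ℓ * ξ (‖z.1‖ / R) ^ ℓ = 0 then 0
        else (ζ (z.2 / T) ^ ℓ * ξ (‖z.1‖ / R) ^ ℓ) ^ (-(1 / (p - 1)))
          * |bilapl (fun y : E N => ζ (z.2 / T) ^ ℓ * ξ (‖y‖ / R) ^ ℓ) z.1| ^ (p / (p - 1))) := by
    intro z
    split_ifs with h
    · exact le_refl 0
    · refine mul_nonneg (Real.rpow_nonneg ?_ _) (Real.rpow_nonneg (abs_nonneg _) _)
      exact mul_nonneg (Real.rpow_nonneg (hζ_range _).1 _) (Real.rpow_nonneg (hξ_range _).1 _)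
  have hgi : Integrable (A.indicator fun _ => M)
      (volume.restrict ((Dc N) ×ˢ Icc (0:ℝ) T)) := by
    rw [integrable_indicator_iff hAmeas]
    refine (integrableOn_const_iff (by finiteness)).mpr (Or.inr ?_)
    calc (volume.restrict ((Dc N) ×ˢ Icc (0:ℝ) T)) A ≤ volume A := by
          rw [Measure.restrict_apply hAmeas]
          exact measure_mono Set.inter_subset_left
      _ < ⊤ := hvolA_lt
  have hmono := integral_mono_of_nonneg (μ := volume.restrict ((Dc N) ×ˢ Icc (0:ℝ) T))
    (Filter.Eventually.of_forall hf0) hgi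
    ((ae_restrict_mem hSmeas).mono hae)
  refine le_trans hmono ?_
  -- evaluate integral of indicator
  rw [integral_indicator_const M hAmeas, smul_eq_mul]
  have htoReal : ((volume.restrict ((Dc N) ×ˢ Icc (0:ℝ) T)) A).toReal
      ≤ (2*R) ^ N * vb * T := by
    have h1 : (volume.restrict ((Dc N) ×ˢ Icc (0:ℝ) T)) A ≤ volume A := by
      rw [Measure.restrict_apply hAmeas]
      exact measure_mono Set.inter_subset_left
    have h2 := ENNReal.toReal_mono hvolA_lt.ne h1
    refine le_trans h2 (le_of_eq ?_)
    rw [hvolA, ENNReal.toReal_mul, ENNReal.toReal_mul, ENNReal.toReal_ofReal (by positivity),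
      ENNReal.toReal_ofReal hT.le, hvbdef]
  calc ((volume.restrict ((Dc N) ×ˢ Icc (0:ℝ) T)) A).toReal * M
      ≤ ((2*R) ^ N * vb * T) * M := by
        exact mul_le_mul_of_nonneg_right htoReal hM0
    _ = (K ^ q * 2 ^ N * vb) * T * (R ^ (N:ℕ) * R ^ (-(4 * q))) := by
        rw [hMdef, mul_pow]
        ring
    _ = (K ^ q * 2 ^ N * vb) * T * R ^ ((N : ℝ) - 4 * q) := by
        congr 1
        rw [← Real.rpow_natCast R N, ← Real.rpow_add hR0, sub_eq_add_neg]
    _ ≤ (K ^ q * 2 ^ N * vb + 1) * T * R ^ ((N : ℝ) - 4 * q) := by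
        have hrp : 0 < R ^ ((N : ℝ) - 4 * q) := Real.rpow_pos_of_pos hR0 _
        have h1 : (K ^ q * 2 ^ N * vb) ≤ K ^ q * 2 ^ N * vb + 1 := by linarith
        exact mul_le_mul_of_nonneg_right
          (mul_le_mul_of_nonneg_right h1 hT.le) hrp.le
end
end
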